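/- arXiv:1805.02967 — 3 statements merged into one kernel-verified Lean document; each statement's English description precedes it below -/
import Mathlib

section
/- Let P ⊂ ℝ^d and Q ⊂ ℝ^e be alcoved polytopes such that Q is level and codeg(Q) ≥ dim(P) + 1. Then the Cartesian product P × Q ⊂ ℝ^{d+e} is level. -/
open scoped Pointwise

/-- The linear functionals `x ↦ x i − x j`, `x ↦ x i`, `x ↦ −x j` (corresponding to
`z_i − z_j` with the convention `z_0 = 0`). -/
def alcFun (ι : Type*) : Set ((ι → ℝ) → ℝ) :=
  {f | (∃ i j : ι, f = fun x => x i - x j) ∨ (∃ i : ι, f = fun x => x i) ∨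
       (∃ j : ι, f = fun x => -x j)}

/-- A polytope is alcoved if it is compact and is an intersection of half-spaces of the
form `z_i − z_j ≤ m` with `m ∈ ℤ` (convention `z_0 = 0`). -/
def IsAlcoved {ι : Type*} [Fintype ι] (P : Set (ι → ℝ)) : Prop :=
  IsCompact P ∧ ∃ (F : Set ((ι → ℝ) → ℝ)) (m : ((ι → ℝ) → ℝ) → ℤ),
    F ⊆ alcFun ι ∧ P = {x | ∀ f ∈ F, f x ≤ (m f : ℝ)}

/-- The set of positive integers `c` such that `cP` contains an interior lattice
point; its least element is the codegree of `P`. -/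
def codegSet {ι : Type*} [Fintype ι] (P : Set (ι → ℝ)) : Set ℕ :=
  {c : ℕ | 0 < c ∧ ∃ z : ι → ℤ, (fun i => (z i : ℝ)) ∈ interior ((c : ℝ) • P)}

/-- `P` is level (with codegree `r`). -/
def IsLevel {ι : Type*} [Fintype ι] (P : Set (ι → ℝ)) (r : ℕ) : Prop :=
  ∀ (k : ℕ) (z : ι → ℤ), r ≤ k → (fun i => (z i : ℝ)) ∈ interior ((k : ℝ) • P) →
    ∃ y w : ι → ℤ, (fun i => (y i : ℝ)) ∈ interior ((r : ℝ) • P) ∧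
      (fun i => (w i : ℝ)) ∈ (((k - r : ℕ) : ℝ)) • P ∧ z = y + w

/-- The Cartesian product `P × Q ⊆ ℝ^{d+e}`. -/
def prodSet {ι κ : Type*} (P : Set (ι → ℝ)) (Q : Set (κ → ℝ)) : Set (ι ⊕ κ → ℝ) :=
  {x | (fun i => x (Sum.inl i)) ∈ P ∧ (fun j => x (Sum.inr j)) ∈ Q}

section A
variable {ι : Type*}

lemma alcFun_finite [Fintype ι] : (alcFun ι).Finite := by
  have h1 : alcFun ι ⊆ (Set.range fun p : ι × ι => (fun x => x p.1 - x p.2 : (ι → ℝ) → ℝ)) ∪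
      (Set.range fun i : ι => (fun x => x i : (ι → ℝ) → ℝ)) ∪
      (Set.range fun j : ι => (fun x => -x j : (ι → ℝ) → ℝ)) := by
    rintro f (⟨i, j, rfl⟩ | ⟨i, rfl⟩ | ⟨j, rfl⟩)
    · exact Or.inl (Or.inl ⟨(i, j), rfl⟩)
    · exact Or.inl (Or.inr ⟨i, rfl⟩)
    · exact Or.inr ⟨j, rfl⟩
  exact (((Set.finite_range _).union (Set.finite_range _)).union (Set.finite_range _)).subset h1

lemma alc_add {f : (ι → ℝ) → ℝ} (hf : f ∈ alcFun ι) (u v : ι → ℝ) :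
    f (u + v) = f u + f v := by
  rcases hf with ⟨i, j, rfl⟩ | ⟨i, rfl⟩ | ⟨j, rfl⟩ <;> simp [Pi.add_apply] <;> ring

lemma alc_smul {f : (ι → ℝ) → ℝ} (hf : f ∈ alcFun ι) (c : ℝ) (u : ι → ℝ) :
    f (c • u) = c * f u := by
  rcases hf with ⟨i, j, rfl⟩ | ⟨i, rfl⟩ | ⟨j, rfl⟩ <;> simp [Pi.smul_apply, smul_eq_mul] <;> ring

lemma alc_cont {f : (ι → ℝ) → ℝ} (hf : f ∈ alcFun ι) : Continuous f := by
  rcases hf with ⟨i, j, rfl⟩ | ⟨i, rfl⟩ | ⟨j, rfl⟩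
  · exact (continuous_apply i).sub (continuous_apply j)
  · exact continuous_apply i
  · exact (continuous_apply j).neg

lemma alc_exists_one {f : (ι → ℝ) → ℝ} (hf : f ∈ alcFun ι) (h0 : f ≠ 0) :
    ∃ v : ι → ℝ, f v = 1 := by
  classical
  rcases hf with ⟨i, j, rfl⟩ | ⟨i, rfl⟩ | ⟨j, rfl⟩
  · by_cases hij : i = j
    · exact absurd (funext fun x => by simp [hij]) h0
    · refine ⟨Pi.single i 1, ?_⟩
      simp [Pi.single_apply, hij, Ne.symm hij]
  · exact ⟨Pi.single i 1, by simp⟩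
  · refine ⟨Pi.single j (-1), by simp⟩

lemma ceil_diff_le {u v : ℝ} {C : ℤ} (h : u - v ≤ (C : ℝ)) :
    (⌈u⌉ : ℝ) - (⌈v⌉ : ℝ) ≤ (C : ℝ) := by
  have h1 : ⌈u⌉ ≤ ⌈v + (C : ℝ)⌉ := Int.ceil_le_ceil (by linarith)
  rw [Int.ceil_add_intCast] at h1
  have : ((⌈u⌉ : ℤ) : ℝ) ≤ ((⌈v⌉ + C : ℤ) : ℝ) := Int.cast_le.mpr h1
  push_cast at this ⊢
  linarith

lemma floor_diff_le {u v : ℝ} {C : ℤ} (h : u - v ≤ (C : ℝ)) :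
    (⌊u⌋ : ℝ) - (⌊v⌋ : ℝ) ≤ (C : ℝ) := by
  have h1 : ⌊u⌋ ≤ ⌊v + (C : ℝ)⌋ := Int.floor_le_floor (by linarith)
  rw [Int.floor_add_intCast] at h1
  have : ((⌊u⌋ : ℤ) : ℝ) ≤ ((⌊v⌋ + C : ℤ) : ℝ) := Int.cast_le.mpr h1
  push_cast at this ⊢
  linarith

lemma alc_ceil {f : (ι → ℝ) → ℝ} (hf : f ∈ alcFun ι) (C : ℤ) (u : ι → ℝ)
    (h : f u ≤ (C : ℝ)) : f (fun i => (⌈u i⌉ : ℝ)) ≤ (C : ℝ) := by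
  rcases hf with ⟨i, j, rfl⟩ | ⟨i, rfl⟩ | ⟨j, rfl⟩
  · exact ceil_diff_le h
  · have h1 : ⌈u i⌉ ≤ C := Int.ceil_le.mpr h
    show ((⌈u i⌉ : ℤ) : ℝ) ≤ (C : ℝ)
    exact_mod_cast h1
  · have := Int.le_ceil (u j)
    simp only at h ⊢
    linarith

lemma alc_floor {f : (ι → ℝ) → ℝ} (hf : f ∈ alcFun ι) (C : ℤ) (u : ι → ℝ)
    (h : f u ≤ (C : ℝ)) : f (fun i => (⌊u i⌋ : ℝ)) ≤ (C : ℝ) := by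
  rcases hf with ⟨i, j, rfl⟩ | ⟨i, rfl⟩ | ⟨j, rfl⟩
  · exact floor_diff_le h
  · have := Int.floor_le (u i)
    simp only at h ⊢
    linarith
  · have h1 : (-C : ℤ) ≤ ⌊u j⌋ := Int.le_floor.mpr (by push_cast; simp only at h; linarith)
    have : ((-C : ℤ) : ℝ) ≤ ((⌊u j⌋ : ℤ) : ℝ) := Int.cast_le.mpr h1
    push_cast at this ⊢
    linarith

end A

section B
variable {ι : Type*} [Fintype ι]

def cSet (F : Finset ((ι → ℝ) → ℝ)) (b : ((ι → ℝ) → ℝ) → ℝ) : Set (ι → ℝ) :=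
  {x | ∀ f ∈ F, f x ≤ b f}

lemma smul_cSet {F : Finset ((ι → ℝ) → ℝ)} (hF : ∀ f ∈ F, f ∈ alcFun ι)
    {b : ((ι → ℝ) → ℝ) → ℝ} {c : ℝ} (hc : 0 < c) :
    c • cSet F b = cSet F (fun f => c * b f) := by
  ext x
  constructor
  · rintro ⟨p, hp, rfl⟩ f hf
    show f (c • p) ≤ c * b f
    rw [alc_smul (hF f hf)]
    exact mul_le_mul_of_nonneg_left (hp f hf) hc.le
  · intro hx
    refine ⟨c⁻¹ • x, fun f hf => ?_, smul_inv_smul₀ hc.ne' x⟩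
    rw [alc_smul (hF f hf)]
    have h1 := hx f hf
    rw [inv_mul_le_iff₀ hc]
    exact h1

lemma interior_cSet {F : Finset ((ι → ℝ) → ℝ)} (hF : ∀ f ∈ F, f ∈ alcFun ι ∧ f ≠ 0)
    {b : ((ι → ℝ) → ℝ) → ℝ} :
    interior (cSet F b) = {x | ∀ f ∈ F, f x < b f} := by
  apply subset_antisymm
  · intro x hx f hf
    obtain ⟨ε, hε, hball⟩ := Metric.mem_nhds_iff.mp (mem_interior_iff_mem_nhds.mp hx)
    obtain ⟨v, hv⟩ := alc_exists_one (hF f hf).1 (hF f hf).2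
    set η := ε / (2 * (‖v‖ + 1)) with hηdef
    have hN : (0:ℝ) ≤ ‖v‖ := norm_nonneg v
    have hηpos : 0 < η := by positivity
    have hmem : x + η • v ∈ cSet F b := by
      apply hball
      simp only [Metric.mem_ball, dist_eq_norm, add_sub_cancel_left, norm_smul,
        Real.norm_eq_abs, abs_of_pos hηpos]
      rw [hηdef, div_mul_eq_mul_div, div_lt_iff₀ (by positivity)]
      nlinarith
    have h2 := hmem f hf
    rw [alc_add (hF f hf).1, alc_smul (hF f hf).1, hv, mul_one] at h2
    linarith
  · have hopen : IsOpen {x : ι → ℝ | ∀ f ∈ F, f x < b f} := by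
      have heq : {x : ι → ℝ | ∀ f ∈ F, f x < b f} = ⋂ f ∈ F, {x | f x < b f} := by
        ext; simp
      rw [heq]
      exact isOpen_biInter_finset fun f hf => isOpen_lt (alc_cont (hF f hf).1) continuous_const
    exact interior_maximal (fun x hx f hf => (hx f hf).le) hopen

lemma alcoved_rep {P : Set (ι → ℝ)} (hP : IsAlcoved P) (hne : P.Nonempty) :
    ∃ (F : Finset ((ι → ℝ) → ℝ)) (m : ((ι → ℝ) → ℝ) → ℤ),
      (∀ f ∈ F, f ∈ alcFun ι ∧ f ≠ 0) ∧ P = cSet F (fun f => (m f : ℝ)) := by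
  classical
  obtain ⟨-, F, m, hsub, rfl⟩ := hP
  have hfin : F.Finite := alcFun_finite.subset hsub
  refine ⟨hfin.toFinset.erase 0, m, ?_, ?_⟩
  · intro f hf
    rw [Finset.mem_erase] at hf
    exact ⟨hsub (hfin.mem_toFinset.mp hf.2), hf.1⟩
  · ext x
    simp only [cSet, Set.mem_setOf_eq]
    constructor
    · intro hx f hf
      rw [Finset.mem_erase, hfin.mem_toFinset] at hf
      exact hx f hf.2
    · intro hx f hf
      by_cases h0 : f = 0
      · obtain ⟨p, hp⟩ := hne
        have := hp f hf
        rw [h0] at this ⊢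
        simpa using this
      · exact hx f (by rw [Finset.mem_erase, hfin.mem_toFinset]; exact ⟨h0, hf⟩)

end B

section D
variable {V : Type*}

def epairs : List V → List (V × V)
  | [] => []
  | [_] => []
  | a :: b :: l => (a, b) :: epairs (b :: l)

def esum (U : V → V → ℝ) (l : List V) : ℝ := ((epairs l).map fun e => U e.1 e.2).sum

@[simp] lemma epairs_nil : epairs ([] : List V) = [] := rfl
@[simp] lemma epairs_single (a : V) : epairs [a] = [] := rfl
@[simp] lemma epairs_cons_cons (a b : V) (l : List V) :
    epairs (a :: b :: l) = (a, b) :: epairs (b :: l) := rfl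

lemma epairs_append (l₁ : List V) (x : V) (l₂ : List V) :
    epairs (l₁ ++ x :: l₂) = epairs (l₁ ++ [x]) ++ epairs (x :: l₂) := by
  induction l₁ with
  | nil => simp
  | cons a l₁ ih =>
    cases l₁ with
    | nil => simp
    | cons c l₁' =>
      simp only [List.cons_append, epairs_cons_cons] at ih ⊢
      rw [ih]

lemma esum_append (U : V → V → ℝ) (l₁ : List V) (x : V) (l₂ : List V) :
    esum U (l₁ ++ x :: l₂) = esum U (l₁ ++ [x]) + esum U (x :: l₂) := by
  unfold esum
  rw [epairs_append, List.map_append, List.sum_append]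

lemma exists_dup {l : List V} (h : ¬ l.Nodup) :
    ∃ (x : V) (s t u : List V), l = s ++ x :: t ++ x :: u := by
  induction l with
  | nil => simp at h
  | cons a l ih =>
    by_cases ha : a ∈ l
    · obtain ⟨s, t, rfl⟩ := List.append_of_mem ha
      exact ⟨a, [], s, t, by simp⟩
    · have h' : ¬ l.Nodup := by simpa [List.nodup_cons, ha] using h
      obtain ⟨x, s, t, u, rfl⟩ := ih h'
      exact ⟨x, a :: s, t, u, rfl⟩

lemma esum_closed_nonneg_of_short [Fintype V] (U : V → V → ℝ)
    (hshort : ∀ (a : V) (l : List V), l.length + 1 ≤ Fintype.card V →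
      0 ≤ esum U (a :: (l ++ [a]))) :
    ∀ (a : V) (l : List V), 0 ≤ esum U (a :: (l ++ [a])) := by
  have H : ∀ (n : ℕ) (a : V) (l : List V), l.length ≤ n → 0 ≤ esum U (a :: (l ++ [a])) := by
    intro n
    induction n with
    | zero =>
      intro a l hl
      have : l = [] := List.eq_nil_of_length_eq_zero (Nat.le_zero.mp hl)
      subst this
      have hcard : 0 + 1 ≤ Fintype.card V := Fintype.card_pos_iff.mpr ⟨a⟩
      exact hshort a [] (by simpa using hcard)
    | succ n ih =>
      intro a l hl
      by_cases hle : l.length + 1 ≤ Fintype.card V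
      · exact hshort a l hle
      · have hnodup : ¬ (a :: l).Nodup := by
          intro hnd
          have := hnd.length_le_card
          simp only [List.length_cons] at this
          omega
        obtain ⟨x, s, t, u, hsplit⟩ := exists_dup hnodup
        cases s with
        | nil =>
          simp only [List.nil_append, List.cons_append, List.cons.injEq] at hsplit
          obtain ⟨rfl, rfl⟩ := hsplit
          simp only [List.length_append, List.length_cons] at hl
          have heq : a :: ((t ++ a :: u) ++ [a]) = (a :: t) ++ a :: (u ++ [a]) := by simp
          rw [heq, esum_append]
          have e1 : (a :: t) ++ [a] = a :: (t ++ [a]) := by simp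
          rw [e1]
          exact add_nonneg (ih a t (by omega)) (ih a u (by omega))
        | cons a0 s' =>
          simp only [List.cons_append, List.cons.injEq] at hsplit
          obtain ⟨rfl, rfl⟩ := hsplit
          simp only [List.length_append, List.length_cons] at hl
          have heq : a :: ((s' ++ x :: t ++ x :: u) ++ [a]) =
              (a :: s') ++ x :: (t ++ x :: (u ++ [a])) := by simp
          have G : esum U (a :: ((s' ++ x :: t ++ x :: u) ++ [a])) =
              esum U (a :: ((s' ++ x :: u) ++ [a])) + esum U (x :: (t ++ [x])) := by
            rw [heq, esum_append U (a :: s') x (t ++ x :: (u ++ [a])),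
              show (x : V) :: (t ++ x :: (u ++ [a])) = (x :: t) ++ x :: (u ++ [a]) by simp,
              esum_append U (x :: t) x (u ++ [a]),
              show a :: ((s' ++ x :: u) ++ [a]) = (a :: s') ++ x :: (u ++ [a]) by simp,
              esum_append U (a :: s') x (u ++ [a]),
              show (x : V) :: t ++ [x] = x :: (t ++ [x]) by simp]
            ring
          have h1 : 0 ≤ esum U (a :: ((s' ++ x :: u) ++ [a])) :=
            ih a (s' ++ x :: u) (by simp only [List.length_append, List.length_cons]; omega)
          have h2 : 0 ≤ esum U (x :: (t ++ [x])) := ih x t (by omega)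
          rw [G]
          linarith
  intro a l
  exact H l.length a l le_rfl

noncomputable def liftWalk (U : V → V → ℝ) (v : V) (a : V) : List V → List V
  | [] => [a]
  | b :: l => if U a b ≤ U a v + U v b then a :: liftWalk U v b l
      else a :: v :: liftWalk U v b l

lemma liftWalk_head (U : V → V → ℝ) (v : V) (l : List V) (b : V) :
    ∃ tl, liftWalk U v b l = b :: tl := by
  cases l with
  | nil => exact ⟨[], rfl⟩
  | cons c l' =>
    by_cases h : U b c ≤ U b v + U v c
    · exact ⟨liftWalk U v c l', by simp [liftWalk, h]⟩
    · exact ⟨v :: liftWalk U v c l', by simp [liftWalk, h]⟩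

lemma liftWalk_esum (U : V → V → ℝ) (v : V) (l : List V) :
    ∀ a, esum U (liftWalk U v a l) = esum (fun p q => min (U p q) (U p v + U v q)) (a :: l) := by
  induction l with
  | nil => intro a; rfl
  | cons b l' ih =>
    intro a
    obtain ⟨tl, htl⟩ := liftWalk_head U v l' b
    have hmin : esum (fun p q => min (U p q) (U p v + U v q)) (a :: b :: l') =
        min (U a b) (U a v + U v b) +
          esum (fun p q => min (U p q) (U p v + U v q)) (b :: l') := by simp [esum]
    by_cases h : U a b ≤ U a v + U v b
    · have hl : liftWalk U v a (b :: l') = a :: b :: tl := by simp [liftWalk, h, htl]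
      rw [hl, show esum U (a :: b :: tl) = U a b + esum U (b :: tl) from by simp [esum],
        ← htl, ih, hmin, min_eq_left h]
    · have hl : liftWalk U v a (b :: l') = a :: v :: b :: tl := by simp [liftWalk, h, htl]
      rw [hl, show esum U (a :: v :: b :: tl) = U a v + (U v b + esum U (b :: tl)) from by
        simp [esum], ← htl, ih, hmin, min_eq_right (le_of_not_ge h)]
      ring

lemma liftWalk_closed (U : V → V → ℝ) (v : V) :
    ∀ (l : List V) (a c : V), ∃ l', liftWalk U v a (l ++ [c]) = a :: (l' ++ [c]) := by
  intro l
  induction l with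
  | nil =>
    intro a c
    by_cases h : U a c ≤ U a v + U v c
    · exact ⟨[], by simp [liftWalk, h]⟩
    · exact ⟨[v], by simp [liftWalk, h]⟩
  | cons b l2 ih =>
    intro a c
    obtain ⟨l'', hl''⟩ := ih b c
    by_cases h : U a b ≤ U a v + U v b
    · exact ⟨b :: l'', by simp [liftWalk, h, hl'']⟩
    · exact ⟨v :: b :: l'', by simp [liftWalk, h, hl'']⟩

lemma esum_map {V' : Type*} (W : V → V → ℝ) (φ : V' → V) (l : List V') :
    esum (fun a b => W (φ a) (φ b)) l = esum W (l.map φ) := by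
  induction l with
  | nil => rfl
  | cons a l ih =>
    cases l with
    | nil => rfl
    | cons b l' =>
      have h1 : esum (fun a b => W (φ a) (φ b)) (a :: b :: l') =
          W (φ a) (φ b) + esum (fun a b => W (φ a) (φ b)) (b :: l') := by simp [esum]
      have h2 : esum W ((a :: b :: l').map φ) = W (φ a) (φ b) + esum W ((b :: l').map φ) := by
        simp [esum]
      rw [h1, h2, ih]

lemma fm_aux : ∀ (n : ℕ) (V : Type*) (_ : Fintype V) (_ : DecidableEq V) (U : V → V → ℝ),
    Fintype.card V ≤ n → (∀ (a : V) (l : List V), 0 ≤ esum U (a :: (l ++ [a]))) →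
    ∃ w : V → ℝ, ∀ a b, w a - w b ≤ U a b := by
  intro n
  induction n with
  | zero =>
    intro V _ _ U hcard _
    have : IsEmpty V := Fintype.card_eq_zero_iff.mp (Nat.le_zero.mp hcard)
    exact ⟨fun _ => 0, fun a => (this.false a).elim⟩
  | succ n ih =>
    intro V _ _ U hcard hcw
    rcases isEmpty_or_nonempty V with hV | hV
    · exact ⟨fun _ => 0, fun a => (hV.false a).elim⟩
    obtain ⟨v⟩ := hV
    have hvv : 0 ≤ U v v := by simpa [esum] using hcw v []
    let V' := {y : V // y ≠ v}
    have hcardV : 0 < Fintype.card V := Fintype.card_pos_iff.mpr ⟨v⟩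
    have hcard' : Fintype.card V' ≤ n := by
      have h1 : Fintype.card V' = Fintype.card V - 1 := by
        simp [V', Fintype.card_subtype_compl, Fintype.card_subtype_eq]
      omega
    have hcw' : ∀ (a : V') (l : List V'),
        0 ≤ esum (fun a b : V' => min (U a.1 b.1) (U a.1 v + U v b.1)) (a :: (l ++ [a])) := by
      intro a l
      have h1 : esum (fun a b : V' => min (U a.1 b.1) (U a.1 v + U v b.1)) (a :: (l ++ [a])) =
          esum (fun p q => min (U p q) (U p v + U v q)) ((a :: (l ++ [a])).map Subtype.val) :=
        esum_map (fun p q => min (U p q) (U p v + U v q)) Subtype.val _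
      rw [h1]
      have h2 : ((a :: (l ++ [a])).map Subtype.val) =
          a.1 :: ((l.map Subtype.val) ++ [a.1]) := by simp
      rw [h2, ← liftWalk_esum]
      obtain ⟨l', hl'⟩ := liftWalk_closed U v (l.map Subtype.val) a.1 a.1
      rw [hl']
      exact hcw a.1 l'
    obtain ⟨w', hw'⟩ := ih V' inferInstance inferInstance _ hcard' hcw'
    rcases isEmpty_or_nonempty V' with hV' | hV'
    · have hall : ∀ a : V, a = v := fun a => by
        by_contra h
        exact hV'.false ⟨a, h⟩
      exact ⟨fun _ => 0, fun a b => by rw [hall a, hall b]; simpa using hvv⟩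
    · set wv : ℝ := Finset.univ.inf' Finset.univ_nonempty (fun b : V' => w' b + U v b.1)
        with hwv
      have hwvle : ∀ c : V', wv ≤ w' c + U v c.1 := fun c =>
        Finset.inf'_le (fun b : V' => w' b + U v b.1) (Finset.mem_univ c)
      have hlewv : ∀ (a : V) (ha : a ≠ v), w' ⟨a, ha⟩ - U a v ≤ wv := by
        intro a ha
        apply Finset.le_inf'
        intro c _
        have h3 := hw' ⟨a, ha⟩ c
        have h4 : min (U a c.1) (U a v + U v c.1) ≤ U a v + U v c.1 := min_le_right _ _
        simp only at h3
        linarith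
      refine ⟨fun a => if h : a = v then wv else w' ⟨a, h⟩, fun a b => ?_⟩
      by_cases ha : a = v <;> by_cases hb : b = v
      · simp only [dif_pos ha, dif_pos hb, ha, hb]
        simpa using hvv
      · simp only [dif_pos ha, dif_neg hb, ha, dite_true]
        have := hwvle ⟨b, hb⟩
        linarith
      · simp only [dif_neg ha, dif_pos hb, hb, dite_true]
        have := hlewv a ha
        linarith
      · simp only [dif_neg ha, dif_neg hb]
        have h3 := hw' ⟨a, ha⟩ ⟨b, hb⟩
        have h4 : min (U a b) (U a v + U v b) ≤ U a b := min_le_left _ _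
        simp only at h3
        linarith

lemma fm [Fintype V] (U : V → V → ℝ)
    (hcw : ∀ (a : V) (l : List V), 0 ≤ esum U (a :: (l ++ [a]))) :
    ∃ w : V → ℝ, ∀ a b, w a - w b ≤ U a b := by
  classical
  exact fm_aux (Fintype.card V) V inferInstance inferInstance U le_rfl hcw

end D

section E
variable {V : Type*} {α : Type*}

lemma epairs_closed_len : ∀ (l : List V) (a c : V),
    (epairs (a :: (l ++ [c]))).length = l.length + 1 := by
  intro l
  induction l with
  | nil => intro a c; rfl
  | cons b l' ih =>
    intro a c
    simp only [List.cons_append, epairs_cons_cons, List.length_cons]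
    rw [show (b :: (l' ++ [c])) = b :: (l' ++ [c]) from rfl]
    have := ih b c
    omega

lemma epairs_tele (φ : V → ℝ) : ∀ (l : List V) (a c : V),
    ((epairs (a :: (l ++ [c]))).map (fun e => φ e.1 - φ e.2)).sum = φ a - φ c := by
  intro l
  induction l with
  | nil => intro a c; simp
  | cons b l' ih =>
    intro a c
    simp only [List.cons_append, epairs_cons_cons, List.map_cons, List.sum_cons]
    have := ih b c
    rw [this]
    ring

lemma lsum_add (l : List α) (f g : α → ℝ) :
    (l.map (fun e => f e + g e)).sum = (l.map f).sum + (l.map g).sum := by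
  induction l with
  | nil => simp
  | cons a l ih => simp [ih]; ring

lemma lsum_lin (l : List α) (f g : α → ℝ) (c d : ℝ) :
    (l.map (fun e => c * f e + d * g e)).sum = c * (l.map f).sum + d * (l.map g).sum := by
  induction l with
  | nil => simp
  | cons a l ih => simp [ih]; ring

lemma lsum_lin3 (l : List α) (f g h : α → ℝ) (c d c3 : ℝ) :
    (l.map (fun e => c * f e + d * g e + c3 * h e)).sum =
      c * (l.map f).sum + d * (l.map g).sum + c3 * (l.map h).sum := by
  induction l with
  | nil => simp
  | cons a l ih => simp [ih]; ring

lemma lsum_cast (l : List α) (f : α → ℤ) :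
    (((l.map f).sum : ℤ) : ℝ) = (l.map (fun e => ((f e : ℤ) : ℝ))).sum := by
  induction l with
  | nil => simp
  | cons a l ih => simp [ih]

lemma lsum_one (l : List α) : (l.map (fun _ => (1 : ℝ))).sum = (l.length : ℝ) := by
  induction l with
  | nil => simp
  | cons a l ih => simp [ih]; ring

end E

section KEY
variable {ι : Type*} [Fintype ι]

def xeZ (x : ι → ℤ) : Option ι → ℤ := fun a => a.elim 0 x

def gfun : Option ι → Option ι → ((ι → ℝ) → ℝ)
  | some i, some j => fun x => x i - x j
  | some i, none => fun x => x i
  | none, some j => fun x => -x j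
  | none, none => 0

lemma alc_repr {f : (ι → ℝ) → ℝ} (hf : f ∈ alcFun ι) : ∃ a b, f = gfun a b := by
  rcases hf with ⟨i, j, rfl⟩ | ⟨i, rfl⟩ | ⟨j, rfl⟩
  · exact ⟨some i, some j, rfl⟩
  · exact ⟨some i, none, rfl⟩
  · exact ⟨none, some j, rfl⟩

lemma gfun_cast (x : ι → ℤ) (a b : Option ι) :
    gfun a b (fun i => (x i : ℝ)) = ((xeZ x a : ℤ) : ℝ) - ((xeZ x b : ℤ) : ℝ) := by
  cases a <;> cases b <;> simp [gfun, xeZ]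

end KEY

section KEY2
variable {ι : Type*} [Fintype ι]

theorem key_round (F : Finset ((ι → ℝ) → ℝ)) (hF : ∀ f ∈ F, f ∈ alcFun ι)
    (m : ((ι → ℝ) → ℝ) → ℤ) (k t : ℕ) (htk : t ≤ k) (hcard : Fintype.card ι + 1 ≤ t)
    (x : ι → ℤ) (hx : ∀ f ∈ F, f (fun i => (x i : ℝ)) < (k : ℝ) * m f) :
    ∃ y : ι → ℤ, (∀ f ∈ F, f (fun i => (y i : ℝ)) ≤ (t : ℝ) * m f - 1) ∧
      (∀ f ∈ F, f (fun i => ((x i - y i : ℤ) : ℝ)) ≤ ((k : ℝ) - t) * m f) := by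
  classical
  set xr : Option ι → ℝ := fun a => ((xeZ x a : ℤ) : ℝ) with hxr
  set β : ℝ := 2 * ∑ c : Option ι, |xr c| with hβ
  have habs : (0:ℝ) ≤ ∑ c : Option ι, |xr c| := Finset.sum_nonneg fun c _ => abs_nonneg _
  have hβ0 : 0 ≤ β := by rw [hβ]; linarith
  have hβbound : ∀ a b, xr a - xr b ≤ β := by
    intro a b
    have h1 : |xr a| ≤ ∑ c, |xr c| :=
      Finset.single_le_sum (fun c _ => abs_nonneg (xr c)) (Finset.mem_univ a)
    have h2 : |xr b| ≤ ∑ c, |xr c| :=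
      Finset.single_le_sum (fun c _ => abs_nonneg (xr c)) (Finset.mem_univ b)
    have h3 : xr a ≤ |xr a| := le_abs_self _
    have h4 : -xr b ≤ |xr b| := neg_le_abs _
    rw [hβ]
    linarith
  set SS : Option ι → Option ι → Finset ℝ := fun a b =>
    ({β} : Finset ℝ) ∪ (F.filter (fun f => f = gfun a b)).image (fun f => (t : ℝ) * m f - 1)
      ∪ (F.filter (fun f => f = gfun b a)).image
          (fun f => ((k : ℝ) - t) * m f + (xr a - xr b)) with hSS
  have hSmem : ∀ a b, β ∈ SS a b := by intro a b; simp [hSS]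
  set U : Option ι → Option ι → ℝ := fun a b => (SS a b).min' ⟨β, hSmem a b⟩ with hU
  have hUle : ∀ a b r, r ∈ SS a b → U a b ≤ r := fun a b r hr => Finset.min'_le _ r hr
  have hxint : ∀ f ∈ F, ∀ a b, f = gfun a b → xr a - xr b ≤ (k : ℝ) * m f - 1 := by
    intro f hf a b hfg
    subst hfg
    have h1 := hx _ hf
    rw [gfun_cast] at h1
    have h2 : (xeZ x a - xeZ x b : ℤ) < (k : ℤ) * m (gfun a b) := by exact_mod_cast h1
    have h3 : (xeZ x a - xeZ x b : ℤ) ≤ (k : ℤ) * m (gfun a b) - 1 := by omega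
    have h4 : ((xeZ x a - xeZ x b : ℤ) : ℝ) ≤ (((k : ℤ) * m (gfun a b) - 1 : ℤ) : ℝ) := by
      exact_mod_cast h3
    push_cast at h4
    simp only [hxr]
    linarith
  have hclass : ∀ a b : Option ι, ∃ p : Fin 3 × ℤ,
      (p.1 = 0 ∧ U a b = (t : ℝ) * p.2 - 1 ∧ xr a - xr b ≤ (k : ℝ) * p.2 - 1) ∨
      (p.1 = 1 ∧ U a b = ((k : ℝ) - t) * p.2 + (xr a - xr b) ∧
        xr b - xr a ≤ (k : ℝ) * p.2 - 1) ∨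
      (p.1 = 2 ∧ U a b = β) := by
    intro a b
    have hmem : U a b ∈ SS a b := Finset.min'_mem _ _
    rw [hSS] at hmem
    simp only [Finset.mem_union, Finset.mem_image, Finset.mem_filter,
      Finset.mem_singleton] at hmem
    rcases hmem with (hval | ⟨f, ⟨hfF, hfg⟩, hval⟩) | ⟨f, ⟨hfF, hfg⟩, hval⟩
    · exact ⟨(2, 0), Or.inr (Or.inr ⟨rfl, hval⟩)⟩
    · exact ⟨(0, m f), Or.inl ⟨rfl, hval.symm, hxint f hfF a b hfg⟩⟩
    · exact ⟨(1, m f), Or.inr (Or.inl ⟨rfl, hval.symm, hxint f hfF b a hfg⟩)⟩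
  choose tg htg using hclass
  set mAf : Option ι × Option ι → ℤ :=
    fun e => if (tg e.1 e.2).1 = 0 then (tg e.1 e.2).2 else 0 with hmAf
  set mBf : Option ι × Option ι → ℤ :=
    fun e => if (tg e.1 e.2).1 = 1 then (tg e.1 e.2).2 else 0 with hmBf
  set aIf : Option ι × Option ι → ℝ :=
    fun e => if (tg e.1 e.2).1 = 0 then 1 else 0 with haIf
  set sf : Option ι × Option ι → ℝ := fun e => U e.1 e.2 - (xr e.1 - xr e.2) with hsf
  have htR : (0:ℝ) ≤ (t:ℝ) := by positivity
  have hktR : (t : ℝ) ≤ (k : ℝ) := by exact_mod_cast htk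
  have hpe1 : ∀ e : Option ι × Option ι,
      ((k : ℝ) - t) * ((mBf e : ℤ) : ℝ) + (-((k : ℝ) - t)) * ((mAf e : ℤ) : ℝ) ≤ sf e := by
    intro e
    rcases htg e.1 e.2 with ⟨h0, hUv, hX⟩ | ⟨h0, hUv, hX⟩ | ⟨h0, hUv⟩
    · have hA : mAf e = (tg e.1 e.2).2 := by simp [hmAf, h0]
      have hB : mBf e = 0 := by simp [hmBf, h0]
      rw [hA, hB]
      have hsfe : sf e = U e.1 e.2 - (xr e.1 - xr e.2) := rfl
      simp only [Int.cast_zero]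
      rw [hsfe, hUv]
      push_cast
      linarith
    · have hA : mAf e = 0 := by simp [hmAf, h0]
      have hB : mBf e = (tg e.1 e.2).2 := by simp [hmBf, h0]
      rw [hA, hB]
      have hsfe : sf e = U e.1 e.2 - (xr e.1 - xr e.2) := rfl
      simp only [Int.cast_zero]
      rw [hsfe, hUv]
      push_cast
      linarith
    · have hA : mAf e = 0 := by simp [hmAf, h0]
      have hB : mBf e = 0 := by simp [hmBf, h0]
      rw [hA, hB]
      have hsfe : sf e = U e.1 e.2 - (xr e.1 - xr e.2) := rfl
      simp only [Int.cast_zero]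
      rw [hsfe, hUv]
      have := hβbound e.1 e.2
      linarith
  have hpe2 : ∀ e : Option ι × Option ι,
      (t : ℝ) * ((mAf e : ℤ) : ℝ) + (-(t : ℝ)) * ((mBf e : ℤ) : ℝ) + (-1) * aIf e ≤
        sf e + (xr e.1 - xr e.2) := by
    intro e
    rcases htg e.1 e.2 with ⟨h0, hUv, hX⟩ | ⟨h0, hUv, hX⟩ | ⟨h0, hUv⟩
    · have hA : mAf e = (tg e.1 e.2).2 := by simp [hmAf, h0]
      have hB : mBf e = 0 := by simp [hmBf, h0]
      have hI : aIf e = 1 := by simp [haIf, h0]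
      rw [hA, hB, hI]
      have hsfe : sf e = U e.1 e.2 - (xr e.1 - xr e.2) := rfl
      simp only [Int.cast_zero]
      rw [hsfe, hUv]
      push_cast
      linarith
    · have hA : mAf e = 0 := by simp [hmAf, h0]
      have hB : mBf e = (tg e.1 e.2).2 := by simp [hmBf, h0]
      have hI : aIf e = 0 := by simp [haIf, h0]
      rw [hA, hB, hI]
      have hsfe : sf e = U e.1 e.2 - (xr e.1 - xr e.2) := rfl
      simp only [Int.cast_zero]
      rw [hsfe, hUv]
      push_cast
      linarith
    · have hA : mAf e = 0 := by simp [hmAf, h0]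
      have hB : mBf e = 0 := by simp [hmBf, h0]
      have hI : aIf e = 0 := by simp [haIf, h0]
      rw [hA, hB, hI]
      have hsfe : sf e = U e.1 e.2 - (xr e.1 - xr e.2) := rfl
      rw [hsfe, hUv]
      linarith
  have hshort : ∀ (a : Option ι) (l : List (Option ι)),
      l.length + 1 ≤ Fintype.card (Option ι) → 0 ≤ esum U (a :: (l ++ [a])) := by
    intro a l hlen
    set E := epairs (a :: (l ++ [a])) with hE
    have hEsum : esum U (a :: (l ++ [a])) = (E.map fun e => U e.1 e.2).sum := rfl
    have htele : (E.map (fun e => xr e.1 - xr e.2)).sum = 0 := by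
      rw [hE, epairs_tele xr l a a]; ring
    have hUeq : (E.map fun e => U e.1 e.2).sum =
        (E.map sf).sum + (E.map (fun e => xr e.1 - xr e.2)).sum := by
      rw [← lsum_add]
      apply congrArg
      apply List.map_congr_left
      intro e _
      rw [hsf]; ring
    have hS : esum U (a :: (l ++ [a])) = (E.map sf).sum := by
      rw [hEsum, hUeq, htele, add_zero]
    have hlenE : (E.length : ℝ) ≤ (t : ℝ) := by
      have h1 : E.length = l.length + 1 := by rw [hE]; exact epairs_closed_len l a a
      have h2 : l.length + 1 ≤ t := by
        have := Fintype.card_option (α := ι)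
        omega
      rw [h1]; exact_mod_cast h2
    set MA : ℤ := (E.map mAf).sum with hMA
    set MB : ℤ := (E.map mBf).sum with hMB
    rw [hS]
    by_cases hMM : MA ≤ MB
    · have h1 : (E.map (fun e => ((k : ℝ) - t) * ((mBf e : ℤ) : ℝ) +
          (-((k : ℝ) - t)) * ((mAf e : ℤ) : ℝ))).sum ≤ (E.map sf).sum :=
        List.sum_le_sum (fun e _ => hpe1 e)
      have h2 : (E.map (fun e => ((k : ℝ) - t) * ((mBf e : ℤ) : ℝ) +
          (-((k : ℝ) - t)) * ((mAf e : ℤ) : ℝ))).sum =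
          ((k : ℝ) - t) * ((MB : ℤ) : ℝ) + (-((k : ℝ) - t)) * ((MA : ℤ) : ℝ) := by
        rw [lsum_lin, hMA, hMB, lsum_cast, lsum_cast]
      have h3 : ((MA : ℤ) : ℝ) ≤ ((MB : ℤ) : ℝ) := by exact_mod_cast hMM
      nlinarith
    · have hMM' : MB + 1 ≤ MA := by omega
      have h1 : (E.map (fun e => (t : ℝ) * ((mAf e : ℤ) : ℝ) +
          (-(t : ℝ)) * ((mBf e : ℤ) : ℝ) + (-1) * aIf e)).sum ≤
          (E.map (fun e => sf e + (xr e.1 - xr e.2))).sum :=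
        List.sum_le_sum (fun e _ => hpe2 e)
      have h2 : (E.map (fun e => sf e + (xr e.1 - xr e.2))).sum =
          (E.map sf).sum + (E.map (fun e => xr e.1 - xr e.2)).sum := lsum_add _ _ _
      have h3 : (E.map (fun e => (t : ℝ) * ((mAf e : ℤ) : ℝ) +
          (-(t : ℝ)) * ((mBf e : ℤ) : ℝ) + (-1) * aIf e)).sum =
          (t : ℝ) * ((MA : ℤ) : ℝ) + (-(t : ℝ)) * ((MB : ℤ) : ℝ) +
            (-1) * (E.map aIf).sum := by
        rw [lsum_lin3, hMA, hMB, lsum_cast, lsum_cast]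
      have h4 : (E.map aIf).sum ≤ (E.map (fun _ => (1 : ℝ))).sum := by
        apply List.sum_le_sum
        intro e _
        simp only [haIf]
        split_ifs <;> norm_num
      have h5 : (E.map (fun _ => (1 : ℝ))).sum = (E.length : ℝ) := lsum_one E
      have h6 : (1 : ℝ) ≤ ((MA : ℤ) : ℝ) - ((MB : ℤ) : ℝ) := by
        have : ((MB + 1 : ℤ) : ℝ) ≤ ((MA : ℤ) : ℝ) := by exact_mod_cast hMM'
        push_cast at this
        linarith
      have h7 : (t : ℝ) * 1 ≤ (t : ℝ) * (((MA : ℤ) : ℝ) - ((MB : ℤ) : ℝ)) :=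
        mul_le_mul_of_nonneg_left h6 htR
      nlinarith
  obtain ⟨w, hw⟩ := fm U (esum_closed_nonneg_of_short U hshort)
  set y : ι → ℤ := fun i => ⌈w (some i) - w none⌉ with hy
  refine ⟨y, ?_, ?_⟩
  · intro f hf
    obtain ⟨a, b, hfg⟩ := alc_repr (hF f hf)
    subst hfg
    rw [gfun_cast]
    have hyZ : ∀ c : Option ι, ((xeZ y c : ℤ) : ℝ) = ((⌈w c - w none⌉ : ℤ) : ℝ) := by
      intro c; cases c <;> simp [xeZ, hy]
    rw [hyZ a, hyZ b]
    have hU1 : U a b ≤ (t : ℝ) * m (gfun a b) - 1 := by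
      apply hUle
      rw [hSS]
      simp only [Finset.mem_union, Finset.mem_image, Finset.mem_filter]
      exact Or.inl (Or.inr ⟨gfun a b, ⟨hf, rfl⟩, rfl⟩)
    have hwd : (w a - w none) - (w b - w none) ≤ (((t : ℤ) * m (gfun a b) - 1 : ℤ) : ℝ) := by
      have := hw a b
      push_cast
      linarith
    have := ceil_diff_le hwd
    push_cast at this ⊢
    linarith
  · intro f hf
    obtain ⟨a, b, hfg⟩ := alc_repr (hF f hf)
    subst hfg
    have hgc : gfun a b (fun i => ((x i - y i : ℤ) : ℝ)) =
        ((xeZ (fun i => x i - y i) a : ℤ) : ℝ) - ((xeZ (fun i => x i - y i) b : ℤ) : ℝ) :=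
      gfun_cast (fun i => x i - y i) a b
    rw [hgc]
    have hxyZ : ∀ c : Option ι, ((xeZ (fun i => x i - y i) c : ℤ) : ℝ) =
        ((⌊xr c - (w c - w none)⌋ : ℤ) : ℝ) := by
      intro c
      cases c with
      | none => simp [xeZ, hxr]
      | some i =>
        have h1 : (⌊((x i : ℤ) : ℝ) - (w (some i) - w none)⌋ : ℤ) =
            x i - ⌈w (some i) - w none⌉ := by
          rw [sub_eq_add_neg, Int.floor_intCast_add, Int.floor_neg, ← sub_eq_add_neg]
        have h2 : xeZ (fun i => x i - y i) (some i) = x i - y i := rfl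
        rw [h2, hy]
        simp only
        rw [show xr (some i) = ((x i : ℤ) : ℝ) from by rw [hxr]; rfl, h1]
    rw [hxyZ a, hxyZ b]
    have hU2 : U b a ≤ ((k : ℝ) - t) * m (gfun a b) + (xr b - xr a) := by
      apply hUle
      rw [hSS]
      simp only [Finset.mem_union, Finset.mem_image, Finset.mem_filter]
      exact Or.inr ⟨gfun a b, ⟨hf, rfl⟩, rfl⟩
    have hAd : (xr a - (w a - w none)) - (xr b - (w b - w none)) ≤
        ((((k : ℤ) - t) * m (gfun a b) : ℤ) : ℝ) := by
      have := hw b a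
      push_cast
      linarith
    have := floor_diff_le hAd
    push_cast at this ⊢
    linarith
end KEY2

section F
variable {ι κ : Type*}

lemma prodSet_smul (P : Set (ι → ℝ)) (Q : Set (κ → ℝ)) {c : ℝ} (hc : c ≠ 0) :
    c • prodSet P Q = prodSet (c • P) (c • Q) := by
  ext x
  constructor
  · rintro ⟨p, hp, rfl⟩
    exact ⟨⟨fun i => p (Sum.inl i), hp.1, rfl⟩, ⟨fun j => p (Sum.inr j), hp.2, rfl⟩⟩
  · rintro ⟨⟨p, hp, hpe⟩, ⟨q, hq, hqe⟩⟩
    refine ⟨fun i => Sum.elim p q i, ⟨hp, hq⟩, ?_⟩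
    funext i
    cases i with
    | inl i => exact congrFun hpe i
    | inr j => exact congrFun hqe j

lemma interior_prodSet (P : Set (ι → ℝ)) (Q : Set (κ → ℝ)) :
    interior (prodSet P Q) = prodSet (interior P) (interior Q) := by
  have h : prodSet P Q =
      (Homeomorph.sumArrowHomeomorphProdArrow (ι := ι) (ι' := κ) (X := ℝ)) ⁻¹' (P ×ˢ Q) := by
    ext x
    simp only [prodSet, Homeomorph.sumArrowHomeomorphProdArrow, Equiv.sumArrowEquivProdArrow,
      Homeomorph.homeomorph_mk_coe, Equiv.coe_fn_mk, Set.mem_preimage, Set.mem_prod,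
      Set.mem_setOf_eq]
    exact Iff.rfl
  have h2 : prodSet (interior P) (interior Q) =
      (Homeomorph.sumArrowHomeomorphProdArrow (ι := ι) (ι' := κ) (X := ℝ)) ⁻¹'
        (interior P ×ˢ interior Q) := by
    ext x
    simp only [prodSet, Homeomorph.sumArrowHomeomorphProdArrow, Equiv.sumArrowEquivProdArrow,
      Homeomorph.homeomorph_mk_coe, Equiv.coe_fn_mk, Set.mem_preimage, Set.mem_prod,
      Set.mem_setOf_eq]
    exact Iff.rfl
  rw [h, h2, ← Homeomorph.preimage_interior, interior_prod_eq]

lemma finrank_vectorSpan_of_interior [Fintype ι] {P : Set (ι → ℝ)}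
    (h : (interior P).Nonempty) :
    Module.finrank ℝ (vectorSpan ℝ P) = Fintype.card ι := by
  have h1 : affineSpan ℝ P = ⊤ :=
    top_unique <| isOpen_interior.affineSpan_eq_top h ▸ affineSpan_mono ℝ interior_subset
  have h2 : vectorSpan ℝ P = ⊤ := by
    rw [← direction_affineSpan, h1, AffineSubspace.direction_top]
  rw [h2, finrank_top, Module.finrank_pi]

end F


/-- If `P` and `Q` are alcoved polytopes, `Q` is level, and
`codeg(Q) ≥ dim P + 1`, then `P × Q` is level. -/
theorem stmt_15 {ι κ : Type*} [Fintype ι] [Fintype κ]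
    (P : Set (ι → ℝ)) (Q : Set (κ → ℝ)) (hP : IsAlcoved P) (hQ : IsAlcoved Q)
    (r : ℕ) (hrQ : IsLeast (codegSet Q) r) (hQlevel : IsLevel Q r)
    (hdim : Module.finrank ℝ (vectorSpan ℝ P) + 1 ≤ r) :
    ∀ s : ℕ, IsLeast (codegSet (prodSet P Q)) s → IsLevel (prodSet P Q) s := by
  classical
  intro s hs
  obtain ⟨⟨hs0, z₀, hz₀⟩, -⟩ := hs
  have hsR : (0 : ℝ) < (s : ℝ) := by exact_mod_cast hs0
  -- product nonempty
  obtain ⟨u, hu, -⟩ := interior_subset hz₀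
  have hPne : P.Nonempty := ⟨_, hu.1⟩
  have hQne : Q.Nonempty := ⟨_, hu.2⟩
  have hprodne : (prodSet P Q).Nonempty := ⟨u, hu⟩
  -- decompose the interior point
  have hz₀' := hz₀
  rw [prodSet_smul P Q (ne_of_gt hsR), interior_prodSet] at hz₀'
  obtain ⟨hzP₀, hzQ₀⟩ := hz₀'
  have hrs : r ≤ s := hrQ.2 ⟨hs0, fun j => z₀ (Sum.inr j), hzQ₀⟩
  have hr0 : 0 < r := hrQ.1.1
  have hPint : (interior P).Nonempty := by
    rw [interior_smul₀ (ne_of_gt hsR)] at hzP₀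
    obtain ⟨p, hp, -⟩ := hzP₀
    exact ⟨p, hp⟩
  have hcard : Fintype.card ι + 1 ≤ s := by
    rw [finrank_vectorSpan_of_interior hPint] at hdim
    omega
  obtain ⟨FP, mP, hFP, hPeq⟩ := alcoved_rep hP hPne
  obtain ⟨FQ, mQ, hFQ, hQeq⟩ := alcoved_rep hQ hQne
  intro k z hsk hz
  by_cases hks : k = s
  · subst hks
    refine ⟨z, 0, hz, ?_, (add_zero z).symm⟩
    rw [show ((k - k : ℕ) : ℝ) = 0 by simp, Set.zero_smul_set hprodne]
    have : (fun i => ((0 : ι ⊕ κ → ℤ) i : ℝ)) = (0 : ι ⊕ κ → ℝ) := by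
      funext i; simp
    rw [this]
    exact Set.zero_mem_zero
  · have hsk' : s < k := lt_of_le_of_ne hsk (Ne.symm hks)
    have hk0 : (0 : ℝ) < (k : ℝ) := by
      have : 0 < k := by omega
      exact_mod_cast this
    rw [prodSet_smul P Q (ne_of_gt hk0), interior_prodSet] at hz
    obtain ⟨hzP, hzQ⟩ := hz
    -- P side
    have hintP : ∀ c : ℝ, 0 < c →
        interior (c • P) = {x | ∀ f ∈ FP, f x < c * mP f} := by
      intro c hc
      rw [hPeq, smul_cSet (fun f hf => (hFP f hf).1) hc, interior_cSet hFP]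
    have hintQ : ∀ c : ℝ, 0 < c →
        interior (c • Q) = {x | ∀ f ∈ FQ, f x < c * mQ f} := by
      intro c hc
      rw [hQeq, smul_cSet (fun f hf => (hFQ f hf).1) hc, interior_cSet hFQ]
    rw [hintP _ hk0] at hzP
    have hzP' : ∀ f ∈ FP, f (fun i => ((z (Sum.inl i) : ℤ) : ℝ)) < (k : ℝ) * mP f := hzP
    obtain ⟨yP, hyP1, hyP2⟩ := key_round FP (fun f hf => (hFP f hf).1) mP k s hsk'.le hcard
      (fun i => z (Sum.inl i)) hzP'
    -- Q side
    have hrk : r ≤ k := hrs.trans hsk'.le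
    obtain ⟨yQ, wQ, hyQint, hwQmem, hzQeq⟩ := hQlevel k (fun j => z (Sum.inr j)) hrk hzQ
    have hrR : (0 : ℝ) < (r : ℝ) := by exact_mod_cast hr0
    rw [hintQ _ hrR] at hyQint
    have hyQs : ∀ f ∈ FQ, f (fun j => (yQ j : ℝ)) < (r : ℝ) * mQ f := hyQint
    have hkr0 : (0 : ℝ) < (k : ℝ) - r := by
      have : r < k := lt_of_le_of_lt hrs hsk'
      have h2 : (r : ℝ) < (k : ℝ) := by exact_mod_cast this
      linarith
    have hwQ : ∀ f ∈ FQ, f (fun j => (wQ j : ℝ)) ≤ ((k : ℝ) - r) * mQ f := by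
      have hcast : ((k - r : ℕ) : ℝ) = (k : ℝ) - r := by
        rw [Nat.cast_sub hrk]
      rw [hcast, hQeq, smul_cSet (fun f hf => (hFQ f hf).1) hkr0] at hwQmem
      exact hwQmem
    set lam : ℝ := ((s : ℝ) - r) / ((k : ℝ) - r) with hlam
    have hsrR : (0 : ℝ) ≤ (s : ℝ) - r := by
      have : (r : ℝ) ≤ (s : ℝ) := by exact_mod_cast hrs
      linarith
    have hlam0 : 0 ≤ lam := div_nonneg hsrR hkr0.le
    have hlamk : lam * ((k : ℝ) - r) = (s : ℝ) - r := by
      rw [hlam, div_mul_cancel₀ _ (ne_of_gt hkr0)]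
    have hlamk2 : (1 - lam) * ((k : ℝ) - r) = (k : ℝ) - s := by
      have : (1 - lam) * ((k : ℝ) - r) = ((k : ℝ) - r) - lam * ((k : ℝ) - r) := by ring
      rw [this, hlamk]; ring
    set w1 : κ → ℤ := fun j => ⌈lam * (wQ j : ℝ)⌉ with hw1def
    set w2 : κ → ℤ := fun j => wQ j - w1 j with hw2def
    have hw1b : ∀ f ∈ FQ, f (fun j => (w1 j : ℝ)) ≤ ((s : ℝ) - r) * mQ f := by
      intro f hf
      have hC : (((s : ℤ) - r) * mQ f : ℤ) = ((s : ℤ) - r) * mQ f := rfl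
      have hb : f (fun j => lam * (wQ j : ℝ)) ≤ ((((s : ℤ) - r) * mQ f : ℤ) : ℝ) := by
        have heq : (fun j => lam * (wQ j : ℝ)) = lam • (fun j => (wQ j : ℝ)) := rfl
        rw [heq, alc_smul (hFQ f hf).1]
        have h1 := mul_le_mul_of_nonneg_left (hwQ f hf) hlam0
        have h2 : lam * (((k : ℝ) - r) * mQ f) = ((s : ℝ) - r) * mQ f := by
          rw [← mul_assoc, hlamk]
        push_cast
        linarith
      have := alc_ceil (hFQ f hf).1 _ _ hb
      push_cast at this ⊢
      exact this
    have hw2fl : ∀ j, w2 j = ⌊(1 - lam) * (wQ j : ℝ)⌋ := by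
      intro j
      rw [hw2def]
      simp only
      rw [show (1 - lam) * ((wQ j : ℤ) : ℝ) = ((wQ j : ℤ) : ℝ) + -(lam * (wQ j : ℝ)) by ring,
        Int.floor_intCast_add, Int.floor_neg, hw1def]
      ring
    have hw2b : ∀ f ∈ FQ, f (fun j => (w2 j : ℝ)) ≤ ((k : ℝ) - s) * mQ f := by
      intro f hf
      have hb : f (fun j => (1 - lam) * (wQ j : ℝ)) ≤ ((((k : ℤ) - s) * mQ f : ℤ) : ℝ) := by
        have heq : (fun j => (1 - lam) * (wQ j : ℝ)) = (1 - lam) • (fun j => (wQ j : ℝ)) := rfl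
        rw [heq, alc_smul (hFQ f hf).1]
        have hlam1 : 0 ≤ 1 - lam := by
          have : lam ≤ 1 := by
            rw [hlam, div_le_one hkr0]
            have : (s : ℝ) ≤ (k : ℝ) := by exact_mod_cast hsk'.le
            linarith
          linarith
        have h1 := mul_le_mul_of_nonneg_left (hwQ f hf) hlam1
        have h2 : (1 - lam) * (((k : ℝ) - r) * mQ f) = ((k : ℝ) - s) * mQ f := by
          rw [← mul_assoc, hlamk2]
        push_cast
        linarith
      have h3 := alc_floor (hFQ f hf).1 _ _ hb
      have h4 : (fun j => ((w2 j : ℤ) : ℝ)) = (fun j => ((⌊(1 - lam) * (wQ j : ℝ)⌋ : ℤ) : ℝ)) := by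
        funext j; rw [hw2fl j]
      rw [h4]
      push_cast at h3 ⊢
      exact h3
    have hyQ's : ∀ f ∈ FQ, f (fun j => ((yQ j + w1 j : ℤ) : ℝ)) < (s : ℝ) * mQ f := by
      intro f hf
      have hadd : (fun j => ((yQ j + w1 j : ℤ) : ℝ)) =
          (fun j => (yQ j : ℝ)) + (fun j => (w1 j : ℝ)) := by
        funext j; push_cast; rfl
      rw [hadd, alc_add (hFQ f hf).1]
      have h1 := hyQs f hf
      have h2 := hw1b f hf
      nlinarith
    refine ⟨Sum.elim yP (fun j => yQ j + w1 j),
      Sum.elim (fun i => z (Sum.inl i) - yP i) w2, ?_, ?_, ?_⟩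
    · rw [prodSet_smul P Q (ne_of_gt hsR), interior_prodSet]
      constructor
      · rw [hintP _ hsR]
        intro f hf
        have h1 := hyP1 f hf
        have heq : (fun i => ((Sum.elim yP (fun j => yQ j + w1 j) : ι ⊕ κ → ℤ) (Sum.inl i) : ℝ))
            = (fun i => (yP i : ℝ)) := rfl
        show _ < _
        rw [heq]
        linarith
      · rw [hintQ _ hsR]
        intro f hf
        have h1 := hyQ's f hf
        exact h1
    · have hcast : ((k - s : ℕ) : ℝ) = (k : ℝ) - s := by rw [Nat.cast_sub hsk'.le]
      have hks0 : (0 : ℝ) < (k : ℝ) - s := by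
        have : (s : ℝ) < (k : ℝ) := by exact_mod_cast hsk'
        linarith
      rw [hcast, prodSet_smul P Q (ne_of_gt hks0)]
      constructor
      · rw [hPeq, smul_cSet (fun f hf => (hFP f hf).1) hks0]
        intro f hf
        exact hyP2 f hf
      · rw [hQeq, smul_cSet (fun f hf => (hFQ f hf).1) hks0]
        intro f hf
        exact hw2b f hf
    · funext i
      cases i with
      | inl i =>
        show z (Sum.inl i) = yP i + (z (Sum.inl i) - yP i)
        ring
      | inr j =>
        show z (Sum.inr j) = (yQ j + w1 j) + w2 j
        have h1 := congrFun hzQeq j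
        have h2 : w2 j = wQ j - w1 j := rfl
        simp only [Pi.add_apply] at h1
        omega
end

section
/- Let Π be a finite poset on d elements and C_s a chain (totally ordered set) with s elements, with all elements of Π incomparable to all elements of C_s. If s ≥ d, then the disjoint-union poset Π ⊔ C_s is level. -/
/-- `x` is an interior lattice point of the cone over the order polytope of `α`
at height `c`: `0 < x i < c` and `x` strictly order-preserving. -/
def OIntPt (α : Type*) [PartialOrder α] (c : ℕ) (x : α → ℤ) : Prop :=
  (∀ i, 0 < x i ∧ x i < (c : ℤ)) ∧ ∀ i j : α, i < j → x i < x j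

/-- `x` is a lattice point of the cone over the order polytope of `α` at height `c`. -/
def OConePt (α : Type*) [PartialOrder α] (c : ℕ) (x : α → ℤ) : Prop :=
  (∀ i, 0 ≤ x i ∧ x i ≤ (c : ℤ)) ∧ ∀ i j : α, i ≤ j → x i ≤ x j

/-- The codegree of the order polytope of `α`. -/
noncomputable def posetCodeg (α : Type*) [PartialOrder α] : ℕ :=
  sInf {c : ℕ | 0 < c ∧ ∃ x : α → ℤ, OIntPt α c x}

/-- A finite poset is level if its order polytope is level. -/
def PosetLevel (α : Type*) [PartialOrder α] : Prop :=
  ∀ (k : ℕ) (x : α → ℤ), OIntPt α k x →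
    ∃ y : α → ℤ, OIntPt α (posetCodeg α) y ∧ OConePt α (k - posetCodeg α) (x - y)

open Sum

set_option linter.unusedSectionVars false

section Aux
variable {α : Type*} [PartialOrder α] [Fintype α]

lemma chain_ge {s : ℕ} (x : α ⊕ Fin s → ℤ) (h1 : ∀ v, 0 < x v)
    (h2 : ∀ i j : α ⊕ Fin s, i < j → x i < x j) :
    ∀ n (h : n < s), (n : ℤ) + 1 ≤ x (Sum.inr ⟨n, h⟩) := by
  intro n
  induction n with
  | zero => intro h; have := h1 (Sum.inr ⟨0, h⟩); omega
  | succ m ih =>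
    intro h
    have hm : m < s := Nat.lt_of_succ_lt h
    have h3 : x (Sum.inr ⟨m, hm⟩) < x (Sum.inr ⟨m+1, h⟩) := by
      apply h2
      exact Sum.inr_lt_inr_iff.mpr (by simp [Fin.lt_def])
    have := ih hm
    push_cast
    push_cast at this
    omega

lemma exists_threshold {γ : Type*} [PartialOrder γ] [Fintype γ] (k : ℕ)
    (hk : Fintype.card γ + 2 ≤ k) (hk3 : 3 ≤ k) (x : γ → ℤ) :
    ∃ t : ℤ, 2 ≤ t ∧ t ≤ (k : ℤ) - 1 ∧ ∀ v w : γ, v < w → x w ≠ t := by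
  classical
  by_cases hne : Nonempty γ
  · obtain ⟨m, -, hm⟩ := Finset.exists_minimal (s := (Finset.univ : Finset γ))
      ⟨hne.some, Finset.mem_univ _⟩
    set Bad : Finset ℤ := (Finset.univ.filter fun w : γ => ∃ v, v < w).image x with hBad
    have hsub : (Finset.univ.filter fun w : γ => ∃ v, v < w) ⊆ Finset.univ.erase m := by
      intro w hw
      simp only [Finset.mem_filter] at hw
      obtain ⟨-, v, hv⟩ := hw
      refine Finset.mem_erase.mpr ⟨?_, Finset.mem_univ _⟩
      rintro rfl
      exact hv.not_ge (hm (Finset.mem_univ v) hv.le)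
    have hcard : Bad.card ≤ Fintype.card γ - 1 := by
      calc Bad.card ≤ (Finset.univ.filter fun w : γ => ∃ v, v < w).card :=
            Finset.card_image_le
        _ ≤ (Finset.univ.erase m).card := Finset.card_le_card hsub
        _ = Fintype.card γ - 1 := by
            rw [Finset.card_erase_of_mem (Finset.mem_univ _), Finset.card_univ]
    have hIcc : (Finset.Icc (2:ℤ) ((k:ℤ)-1)).card = k - 2 := by
      rw [Int.card_Icc]
      have : (k:ℤ) - 1 + 1 - 2 = (k:ℤ) - 2 := by ring
      rw [this]
      omega
    have hgood : 0 < ((Finset.Icc (2:ℤ) ((k:ℤ)-1)) \ Bad).card := by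
      have := Finset.le_card_sdiff Bad (Finset.Icc (2:ℤ) ((k:ℤ)-1))
      have hc : 1 ≤ Fintype.card γ := Fintype.card_pos_iff.mpr hne
      omega
    obtain ⟨t, ht⟩ := Finset.card_pos.mp hgood
    rw [Finset.mem_sdiff, Finset.mem_Icc] at ht
    refine ⟨t, ht.1.1, ht.1.2, fun v w hvw hxw => ?_⟩
    apply ht.2
    rw [hBad]
    exact Finset.mem_image.mpr ⟨w, Finset.mem_filter.mpr ⟨Finset.mem_univ _, v, hvw⟩, hxw⟩
  · exact ⟨2, le_refl _, by omega, fun v w hvw => absurd ⟨v⟩ hne⟩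

/-- Decrement step: peel off an order filter from an interior point. -/
lemma decrement {s k : ℕ} (hs : Fintype.card α ≤ s) (hk : s + 2 ≤ k) (hs1 : 1 ≤ s)
    (x : α ⊕ Fin s → ℤ) (hx : OIntPt (α ⊕ Fin s) k x) :
    ∃ χ : α ⊕ Fin s → ℤ, (∀ v, 0 ≤ χ v ∧ χ v ≤ 1) ∧
      (∀ v w : α ⊕ Fin s, v ≤ w → χ v ≤ χ w) ∧
      OIntPt (α ⊕ Fin s) (k - 1) (fun v => x v - χ v) := by
  classical
  obtain ⟨hb, hstrict⟩ := hx
  have hk3 : 3 ≤ k := by omega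
  obtain ⟨t₁, ht₁2, ht₁k, ht₁⟩ := exists_threshold (γ := α) k (by omega) hk3 (fun a => x (inl a))
  obtain ⟨t₂, ht₂2, ht₂k, ht₂⟩ := exists_threshold (γ := Fin s) k
    (by simpa using hk) hk3 (fun i => x (inr i))
  set χ : α ⊕ Fin s → ℤ := Sum.elim (fun a => if t₁ ≤ x (inl a) then 1 else 0)
    (fun i => if t₂ ≤ x (inr i) then 1 else 0) with hχ
  have h01 : ∀ v, 0 ≤ χ v ∧ χ v ≤ 1 := by
    intro v
    rcases v with a | i <;> simp only [hχ, Sum.elim_inl, Sum.elim_inr] <;> split <;> omega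
  have hup : ∀ v w : α ⊕ Fin s, v < w → χ v ≤ χ w := by
    intro v w hvw
    rcases v with a | i <;> rcases w with b | j
    · have hxx : x (inl a) < x (inl b) := hstrict _ _ hvw
      simp only [hχ, Sum.elim_inl]; split <;> split <;> omega
    · exact absurd hvw Sum.not_inl_lt_inr
    · exact absurd hvw Sum.not_inr_lt_inl
    · have hxx : x (inr i) < x (inr j) := hstrict _ _ hvw
      simp only [hχ, Sum.elim_inr]; split <;> split <;> omega
  have hkc : ((k - 1 : ℕ) : ℤ) = (k : ℤ) - 1 := by omega
  refine ⟨χ, h01, ?_, ⟨?_, ?_⟩⟩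
  · intro v w hvw
    rcases eq_or_lt_of_le hvw with rfl | h
    · exact le_rfl
    · exact hup v w h
  · intro v
    have hbv := hb v
    rw [hkc]
    rcases v with a | i
    · simp only [hχ, Sum.elim_inl]
      split <;> omega
    · simp only [hχ, Sum.elim_inr]
      split <;> omega
  · intro v w hvw
    have hxx : x v < x w := hstrict _ _ hvw
    rcases v with a | i <;> rcases w with b | j
    · have hab : a < b := Sum.inl_lt_inl_iff.mp hvw
      have hne : x (inl b) ≠ t₁ := ht₁ a b hab
      simp only [hχ, Sum.elim_inl]
      split <;> split <;> omega
    · exact absurd hvw Sum.not_inl_lt_inr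
    · exact absurd hvw Sum.not_inr_lt_inl
    · have hij : i < j := Sum.inr_lt_inr_iff.mp hvw
      have hne : x (inr j) ≠ t₂ := ht₂ i j hij
      simp only [hχ, Sum.elim_inr]
      split <;> split <;> omega

/-- The codegree of the disjoint union with a chain of length `s ≥ card α`. -/
lemma codeg_eq (s : ℕ) (hs : Fintype.card α ≤ s) :
    posetCodeg (α ⊕ Fin s) = s + 1 := by
  classical
  have hmem : s + 1 ∈ {c : ℕ | 0 < c ∧ ∃ x : α ⊕ Fin s → ℤ, OIntPt (α ⊕ Fin s) c x} := by
    refine ⟨Nat.succ_pos s, Sum.elim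
      (fun a => ((Finset.univ.filter (· < a)).card : ℤ) + 1) (fun i => (i : ℤ) + 1), ?_, ?_⟩
    · intro v
      rcases v with a | i
      · simp only [Sum.elim_inl]
        constructor
        · positivity
        · have h1 : (Finset.univ.filter (· < a)) ⊆ Finset.univ.erase a := by
            intro b hb
            simp only [Finset.mem_filter] at hb
            exact Finset.mem_erase.mpr ⟨ne_of_lt hb.2, Finset.mem_univ _⟩
          have h2 : (Finset.univ.filter (· < a)).card ≤ Fintype.card α - 1 := by
            calc (Finset.univ.filter (· < a)).card ≤ (Finset.univ.erase a).card :=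
                  Finset.card_le_card h1
              _ = Fintype.card α - 1 := by
                  rw [Finset.card_erase_of_mem (Finset.mem_univ _), Finset.card_univ]
          have h3 : 1 ≤ Fintype.card α := Fintype.card_pos_iff.mpr ⟨a⟩
          push_cast
          omega
      · simp only [Sum.elim_inr]
        have := i.isLt
        push_cast
        omega
    · intro v w hvw
      rcases v with a | i <;> rcases w with b | j
      · have hab : a < b := Sum.inl_lt_inl_iff.mp hvw
        simp only [Sum.elim_inl]
        have hss : (Finset.univ.filter (· < a)) ⊂ (Finset.univ.filter (· < b)) := by
          constructor
          · intro c hc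
            simp only [Finset.mem_filter] at *
            exact ⟨Finset.mem_univ _, lt_trans hc.2 hab⟩
          · intro hsub
            have : a ∈ Finset.univ.filter (· < b) := by
              simp only [Finset.mem_filter]
              exact ⟨Finset.mem_univ _, hab⟩
            have := hsub this
            simp only [Finset.mem_filter] at this
            exact lt_irrefl a this.2
        have := Finset.card_lt_card hss
        omega
      · exact absurd hvw Sum.not_inl_lt_inr
      · exact absurd hvw Sum.not_inr_lt_inl
      · have hij : i < j := Sum.inr_lt_inr_iff.mp hvw
        simp only [Sum.elim_inr]
        have : (i : ℕ) < (j : ℕ) := hij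
        omega
  apply le_antisymm
  · exact Nat.sInf_le hmem
  · apply le_csInf ⟨s + 1, hmem⟩
    rintro c ⟨hc0, x, hxb, hxs⟩
    rcases Nat.eq_zero_or_pos s with rfl | hs1
    · omega
    · have h1 : ∀ v, 0 < x v := fun v => (hxb v).1
      have := chain_ge x h1 hxs (s - 1) (by omega)
      have h2 := (hxb (Sum.inr ⟨s - 1, by omega⟩)).2
      omega

/-- Key lemma: the levelness decomposition, by induction on the height. -/
lemma key (s : ℕ) (hs : Fintype.card α ≤ s) (hs1 : 1 ≤ s) :
    ∀ k (x : α ⊕ Fin s → ℤ), OIntPt (α ⊕ Fin s) k x →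
      ∃ y : α ⊕ Fin s → ℤ, OIntPt (α ⊕ Fin s) (s + 1) y ∧
        OConePt (α ⊕ Fin s) (k - (s + 1)) (x - y) := by
  intro k
  induction k using Nat.strong_induction_on with
  | _ k ih =>
    intro x hx
    -- k ≥ s + 1
    have hk1 : s + 1 ≤ k := by
      have h1 : ∀ v, 0 < x v := fun v => (hx.1 v).1
      have := chain_ge x h1 hx.2 (s - 1) (by omega)
      have h2 := (hx.1 (Sum.inr ⟨s - 1, by omega⟩)).2
      omega
    by_cases hk2 : k = s + 1
    · subst hk2
      refine ⟨x, hx, ?_, ?_⟩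
      · intro v; simp
      · intro v w hvw; simp
    · have hk3 : s + 2 ≤ k := by omega
      obtain ⟨χ, hχ01, hχmono, hχint⟩ := decrement hs hk3 hs1 x hx
      obtain ⟨y, hy, hcone⟩ := ih (k - 1) (by omega) _ hχint
      refine ⟨y, hy, ?_, ?_⟩
      · intro v
        have h1 := (hcone.1 v).1
        have h2 := (hcone.1 v).2
        have h3 := hχ01 v
        simp only [Pi.sub_apply] at *
        constructor
        · omega
        · have hc1 : ((k - 1 - (s + 1) : ℕ) : ℤ) = (k : ℤ) - 1 - (s + 1) := by omega
          have hc2 : ((k - (s + 1) : ℕ) : ℤ) = (k : ℤ) - (s + 1) := by omega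
          rw [hc1] at h2
          rw [hc2]
          omega
      · intro v w hvw
        have h1 := hcone.2 v w hvw
        have h2 := hχmono v w hvw
        simp only [Pi.sub_apply] at *
        omega

end Aux

/-- Let `Π` be a poset on `d` elements and `C_s` a chain with `s` elements, with all
elements of `Π` incomparable to all elements of `C_s`. If `s ≥ d`, then the disjoint
union `Π ⊔ C_s` is level. (The disjoint-union order on `α ⊕ Fin s` is the one in which
`inl` and `inr` elements are incomparable.) -/
theorem stmt_16 (α : Type*) [PartialOrder α] [Fintype α] (s : ℕ)
    (hs : Fintype.card α ≤ s) :
    PosetLevel (α ⊕ Fin s) := by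
  rcases Nat.eq_zero_or_pos s with rfl | hs1
  · -- empty poset
    have hα : Fintype.card α = 0 := Nat.le_zero.mp hs
    haveI : IsEmpty α := Fintype.card_eq_zero_iff.mp hα
    haveI : IsEmpty (α ⊕ Fin 0) := by infer_instance
    intro k x _
    refine ⟨x, ⟨fun v => isEmptyElim v, fun v => isEmptyElim v⟩,
      fun v => isEmptyElim v, fun v => isEmptyElim v⟩
  · intro k x hx
    rw [codeg_eq s hs]
    exact key s hs hs1 k x hx
end

section
/- Let P = conv{(0,0,0),(1,0,0),(0,1,0),(1,1,2)} ⊂ ℝ³ and Q = conv{(0,0),(1,0),(0,1)} ⊂ ℝ². Then P and Q are both level (indeed Gorenstein), but the Cartesian product P × Q ⊂ ℝ⁵ is not level: the lattice point (2,2,2,2,1) lies in int(4(P×Q)) but cannot be written as x₁ + x₂ with x₁ ∈ int(3(P×Q)) ∩ ℤ⁵ and x₂ ∈ (P×Q) ∩ ℤ⁵, while codeg(P×Q) = 3. -/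
open scoped Pointwise

/-- The simplex `P = conv{(0,0,0),(1,0,0),(0,1,0),(1,1,2)} ⊂ ℝ³`. -/
noncomputable def Pex : Set (Fin 3 → ℝ) :=
  convexHull ℝ {![0, 0, 0], ![1, 0, 0], ![0, 1, 0], ![1, 1, 2]}

/-- The simplex `Q = conv{(0,0),(1,0),(0,1)} ⊂ ℝ²`. -/
noncomputable def Qex : Set (Fin 2 → ℝ) :=
  convexHull ℝ {![0, 0], ![1, 0], ![0, 1]}

/-- The lattice point `(2,2,2,2,1)` of `ℝ⁵ = ℝ³ × ℝ²`. -/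
def zex : Fin 3 ⊕ Fin 2 → ℤ := Sum.elim ![2, 2, 2] ![2, 1]

section helpers
variable {ι : Type*} [Fintype ι]

lemma interior_le_strict {S : Set (ι → ℝ)} {a : ι → ℝ} {b : ℝ} (ha : a ≠ 0)
    (hS : ∀ y ∈ S, ∑ i, a i * y i ≤ b) {x : ι → ℝ} (hx : x ∈ interior S) :
    ∑ i, a i * x i < b := by
  obtain ⟨ε, hε, hball⟩ := Metric.isOpen_iff.1 isOpen_interior x hx
  set δ := ε / (2 * (‖a‖ + 1)) with hδ
  have hna : (0:ℝ) < ‖a‖ + 1 := by positivity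
  have hδpos : 0 < δ := by positivity
  have hmem : x + δ • a ∈ S := by
    apply interior_subset
    apply hball
    rw [Metric.mem_ball, dist_eq_norm]
    have h1 : x + δ • a - x = δ • a := by abel
    rw [h1, norm_smul, Real.norm_eq_abs, abs_of_pos hδpos]
    have h2 : δ * (‖a‖ + 1) = ε / 2 := by rw [hδ]; field_simp
    nlinarith [norm_nonneg a]
  have hs := hS _ hmem
  have hsum : ∑ i, a i * (x + δ • a) i = ∑ i, a i * x i + δ * ∑ i, a i * a i := by
    rw [Finset.mul_sum, ← Finset.sum_add_distrib]
    refine Finset.sum_congr rfl fun i _ => ?_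
    simp only [Pi.add_apply, Pi.smul_apply, smul_eq_mul]
    ring
  obtain ⟨j, hj⟩ := Function.ne_iff.1 ha
  have hpos : 0 < ∑ i, a i * a i :=
    Finset.sum_pos' (fun i _ => mul_self_nonneg _) ⟨j, Finset.mem_univ j, mul_self_pos.2 hj⟩
  rw [hsum] at hs
  nlinarith

end helpers

lemma memQ1 {x : Fin 2 → ℝ} : x ∈ Qex ↔ 0 ≤ x 0 ∧ 0 ≤ x 1 ∧ x 0 + x 1 ≤ 1 := by
  constructor
  · intro h
    have := convexHull_min (s := {![0, 0], ![1, 0], ![0, 1]})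
      (t := {y : Fin 2 → ℝ | 0 ≤ y 0 ∧ 0 ≤ y 1 ∧ y 0 + y 1 ≤ 1}) ?_ ?_ h
    · exact this
    · intro y hy
      simp only [Set.mem_insert_iff, Set.mem_singleton_iff] at hy
      rcases hy with rfl | rfl | rfl <;> norm_num
    · rintro u ⟨hu0, hu1, hu2⟩ v ⟨hv0, hv1, hv2⟩ a b ha hb hab
      refine ⟨?_, ?_, ?_⟩ <;> simp only [Pi.add_apply, Pi.smul_apply, smul_eq_mul] <;> nlinarith
  · rintro ⟨h0, h1, h2⟩
    have hv : ∀ i : Fin 3, (![![0,0], ![1,0], ![0,1]] : Fin 3 → Fin 2 → ℝ) i ∈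
        ({![0, 0], ![1, 0], ![0, 1]} : Set (Fin 2 → ℝ)) := by
      intro i; fin_cases i <;> simp [Set.mem_insert_iff]
    have hc := (convex_convexHull ℝ ({![0, 0], ![1, 0], ![0, 1]} : Set (Fin 2 → ℝ))).sum_mem
      (t := Finset.univ) (w := ![1 - x 0 - x 1, x 0, x 1])
      (z := ![![0,0], ![1,0], ![0,1]])
      (by intro i _; fin_cases i <;> simp <;> linarith)
      (by simp [Fin.sum_univ_three]; ring)
      (fun i _ => subset_convexHull ℝ _ (hv i))
    have hx : ∑ i : Fin 3, (![1 - x 0 - x 1, x 0, x 1] : Fin 3 → ℝ) i •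
        (![![0,0], ![1,0], ![0,1]] : Fin 3 → Fin 2 → ℝ) i = x := by
      funext j
      fin_cases j <;> simp [Fin.sum_univ_three, Matrix.vecHead, Matrix.vecTail]
    rw [hx] at hc
    exact hc

lemma memP1 {x : Fin 3 → ℝ} :
    x ∈ Pex ↔ 0 ≤ x 2 ∧ x 2 ≤ 2 * x 0 ∧ x 2 ≤ 2 * x 1 ∧ 2 * x 0 + 2 * x 1 - x 2 ≤ 2 := by
  constructor
  · intro h
    have := convexHull_min (s := {![0, 0, 0], ![1, 0, 0], ![0, 1, 0], ![1, 1, 2]})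
      (t := {y : Fin 3 → ℝ | 0 ≤ y 2 ∧ y 2 ≤ 2 * y 0 ∧ y 2 ≤ 2 * y 1 ∧
        2 * y 0 + 2 * y 1 - y 2 ≤ 2}) ?_ ?_ h
    · exact this
    · intro y hy
      simp only [Set.mem_insert_iff, Set.mem_singleton_iff] at hy
      rcases hy with rfl | rfl | rfl | rfl <;> norm_num [Matrix.cons_val_two]
    · rintro u ⟨hu0, hu1, hu2, hu3⟩ v ⟨hv0, hv1, hv2, hv3⟩ a b ha hb hab
      refine ⟨?_, ?_, ?_, ?_⟩ <;> simp only [Pi.add_apply, Pi.smul_apply, smul_eq_mul] <;>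
        nlinarith
  · rintro ⟨h0, h1, h2, h3⟩
    have hv : ∀ i : Fin 4, (![![0,0,0], ![1,0,0], ![0,1,0], ![1,1,2]] : Fin 4 → Fin 3 → ℝ) i ∈
        ({![0, 0, 0], ![1, 0, 0], ![0, 1, 0], ![1, 1, 2]} : Set (Fin 3 → ℝ)) := by
      intro i; fin_cases i <;> simp [Set.mem_insert_iff]
    have hc := (convex_convexHull ℝ
        ({![0, 0, 0], ![1, 0, 0], ![0, 1, 0], ![1, 1, 2]} : Set (Fin 3 → ℝ))).sum_mem
      (t := Finset.univ)
      (w := ![1 - x 0 - x 1 + x 2 / 2, x 0 - x 2 / 2, x 1 - x 2 / 2, x 2 / 2])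
      (z := ![![0,0,0], ![1,0,0], ![0,1,0], ![1,1,2]])
      (by intro i _; fin_cases i <;> simp <;> linarith)
      (by simp [Fin.sum_univ_four]; ring)
      (fun i _ => subset_convexHull ℝ _ (hv i))
    have hx : ∑ i : Fin 4,
        (![1 - x 0 - x 1 + x 2 / 2, x 0 - x 2 / 2, x 1 - x 2 / 2, x 2 / 2] : Fin 4 → ℝ) i •
        (![![0,0,0], ![1,0,0], ![0,1,0], ![1,1,2]] : Fin 4 → Fin 3 → ℝ) i = x := by
      funext j
      fin_cases j <;> simp [Fin.sum_univ_four, Matrix.vecHead, Matrix.vecTail]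
    rw [hx] at hc
    exact hc

lemma Qne : Qex.Nonempty := ⟨![0, 0], subset_convexHull ℝ _ (Set.mem_insert _ _)⟩

lemma Pne : Pex.Nonempty := ⟨![0, 0, 0], subset_convexHull ℝ _ (Set.mem_insert _ _)⟩

lemma memQ {c : ℝ} (hc : 0 ≤ c) {x : Fin 2 → ℝ} :
    x ∈ c • Qex ↔ 0 ≤ x 0 ∧ 0 ≤ x 1 ∧ x 0 + x 1 ≤ c := by
  rcases eq_or_lt_of_le hc with rfl | hc
  · rw [Set.zero_smul_set Qne]
    constructor
    · intro h
      rw [Set.mem_zero] at h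
      subst h
      norm_num
    · rintro ⟨h0, h1, h2⟩
      rw [Set.mem_zero]
      funext i
      fin_cases i <;> simp <;> linarith
  · constructor
    · intro h
      obtain ⟨y, hy, rfl⟩ := h
      obtain ⟨h0, h1, h2⟩ := memQ1.1 hy
      simp only [Pi.smul_apply, smul_eq_mul]
      refine ⟨mul_nonneg hc.le h0, mul_nonneg hc.le h1, ?_⟩
      nlinarith
    · rintro ⟨h0, h1, h2⟩
      refine ⟨c⁻¹ • x, ?_, (smul_inv_smul₀ hc.ne' x)⟩
      rw [memQ1]
      have hci : (0:ℝ) ≤ c⁻¹ := by positivity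
      have hcc : c⁻¹ * c = 1 := inv_mul_cancel₀ hc.ne'
      simp only [Pi.smul_apply, smul_eq_mul]
      refine ⟨mul_nonneg hci h0, mul_nonneg hci h1, ?_⟩
      have := mul_le_mul_of_nonneg_left h2 hci
      nlinarith
  
lemma memP {c : ℝ} (hc : 0 ≤ c) {x : Fin 3 → ℝ} :
    x ∈ c • Pex ↔ 0 ≤ x 2 ∧ x 2 ≤ 2 * x 0 ∧ x 2 ≤ 2 * x 1 ∧
      2 * x 0 + 2 * x 1 - x 2 ≤ 2 * c := by
  rcases eq_or_lt_of_le hc with rfl | hc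
  · rw [Set.zero_smul_set Pne]
    constructor
    · intro h
      rw [Set.mem_zero] at h
      subst h
      norm_num
    · rintro ⟨h0, h1, h2, h3⟩
      rw [Set.mem_zero]
      funext i
      fin_cases i <;> simp <;> linarith
  · constructor
    · intro h
      obtain ⟨y, hy, rfl⟩ := h
      obtain ⟨h0, h1, h2, h3⟩ := memP1.1 hy
      simp only [Pi.smul_apply, smul_eq_mul]
      refine ⟨mul_nonneg hc.le h0, by nlinarith, by nlinarith, by nlinarith⟩
    · rintro ⟨h0, h1, h2, h3⟩
      refine ⟨c⁻¹ • x, ?_, (smul_inv_smul₀ hc.ne' x)⟩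
      rw [memP1]
      have hci : (0:ℝ) ≤ c⁻¹ := by positivity
      have hcc : c⁻¹ * c = 1 := inv_mul_cancel₀ hc.ne'
      simp only [Pi.smul_apply, smul_eq_mul]
      have t1 := mul_le_mul_of_nonneg_left h1 hci
      have t2 := mul_le_mul_of_nonneg_left h2 hci
      have t3 := mul_le_mul_of_nonneg_left h3 hci
      refine ⟨mul_nonneg hci h0, by nlinarith, by nlinarith, by nlinarith⟩

lemma memProd {c : ℝ} (hc : c ≠ 0) {P : Set (Fin 3 → ℝ)} {Q : Set (Fin 2 → ℝ)}
    {x : Fin 3 ⊕ Fin 2 → ℝ} :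
    x ∈ c • prodSet P Q ↔
      (fun i => x (Sum.inl i)) ∈ c • P ∧ (fun j => x (Sum.inr j)) ∈ c • Q := by
  rw [Set.mem_smul_set_iff_inv_smul_mem₀ hc, Set.mem_smul_set_iff_inv_smul_mem₀ hc,
    Set.mem_smul_set_iff_inv_smul_mem₀ hc]
  exact Iff.rfl

lemma intQ {c : ℝ} (hc : 0 < c) {x : Fin 2 → ℝ} :
    x ∈ interior (c • Qex) ↔ 0 < x 0 ∧ 0 < x 1 ∧ x 0 + x 1 < c := by
  constructor
  · intro h
    have h0 := interior_le_strict (a := ![-1, 0]) (b := 0)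
      (by intro hh; have := congrFun hh 0; norm_num at this)
      (by intro y hy; obtain ⟨a0, a1, a2⟩ := (memQ hc.le).1 hy
          simp [Fin.sum_univ_two]; linarith) h
    have h1 := interior_le_strict (a := ![0, -1]) (b := 0)
      (by intro hh; have := congrFun hh 1; norm_num at this)
      (by intro y hy; obtain ⟨a0, a1, a2⟩ := (memQ hc.le).1 hy
          simp [Fin.sum_univ_two]; linarith) h
    have h2 := interior_le_strict (a := ![1, 1]) (b := c)
      (by intro hh; have := congrFun hh 0; norm_num at this)
      (by intro y hy; obtain ⟨a0, a1, a2⟩ := (memQ hc.le).1 hy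
          simp [Fin.sum_univ_two]; linarith) h
    simp [Fin.sum_univ_two] at h0 h1 h2
    exact ⟨by linarith, by linarith, by linarith⟩
  · intro h
    have hopen : IsOpen {y : Fin 2 → ℝ | 0 < y 0 ∧ 0 < y 1 ∧ y 0 + y 1 < c} :=
      (isOpen_lt continuous_const (continuous_apply 0)).and
        ((isOpen_lt continuous_const (continuous_apply 1)).and
          (isOpen_lt ((continuous_apply 0).add (continuous_apply 1)) continuous_const))
    exact interior_maximal
      (fun y hy => (memQ hc.le).2 ⟨hy.1.le, hy.2.1.le, hy.2.2.le⟩) hopen h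

lemma intP {c : ℝ} (hc : 0 < c) {x : Fin 3 → ℝ} :
    x ∈ interior (c • Pex) ↔ 0 < x 2 ∧ x 2 < 2 * x 0 ∧ x 2 < 2 * x 1 ∧
      2 * x 0 + 2 * x 1 - x 2 < 2 * c := by
  constructor
  · intro h
    have h0 := interior_le_strict (a := ![0, 0, -1]) (b := 0)
      (by intro hh; have := congrFun hh 2; norm_num [Matrix.cons_val_two] at this)
      (by intro y hy; obtain ⟨a0, a1, a2, a3⟩ := (memP hc.le).1 hy
          simp [Fin.sum_univ_three]; linarith) h
    have h1 := interior_le_strict (a := ![-2, 0, 1]) (b := 0)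
      (by intro hh; have := congrFun hh 0; norm_num at this)
      (by intro y hy; obtain ⟨a0, a1, a2, a3⟩ := (memP hc.le).1 hy
          simp [Fin.sum_univ_three]; linarith) h
    have h2 := interior_le_strict (a := ![0, -2, 1]) (b := 0)
      (by intro hh; have := congrFun hh 1; norm_num at this)
      (by intro y hy; obtain ⟨a0, a1, a2, a3⟩ := (memP hc.le).1 hy
          simp [Fin.sum_univ_three]; linarith) h
    have h3 := interior_le_strict (a := ![2, 2, -1]) (b := 2 * c)
      (by intro hh; have := congrFun hh 0; norm_num at this)
      (by intro y hy; obtain ⟨a0, a1, a2, a3⟩ := (memP hc.le).1 hy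
          simp [Fin.sum_univ_three]; linarith) h
    simp [Fin.sum_univ_three] at h0 h1 h2 h3
    exact ⟨by linarith, by linarith, by linarith, by linarith⟩
  · intro h
    have hopen : IsOpen {y : Fin 3 → ℝ | 0 < y 2 ∧ y 2 < 2 * y 0 ∧ y 2 < 2 * y 1 ∧
        2 * y 0 + 2 * y 1 - y 2 < 2 * c} :=
      (isOpen_lt continuous_const (continuous_apply 2)).and
        ((isOpen_lt (continuous_apply 2) (by fun_prop)).and
          ((isOpen_lt (continuous_apply 2) (by fun_prop)).and
            (isOpen_lt (by fun_prop) continuous_const)))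
    exact interior_maximal
      (fun y hy => (memP hc.le).2 ⟨hy.1.le, hy.2.1.le, hy.2.2.1.le, hy.2.2.2.le⟩) hopen h

lemma memProdIneq {c : ℝ} (hc : 0 < c) {x : Fin 3 ⊕ Fin 2 → ℝ} :
    x ∈ c • prodSet Pex Qex ↔
      (0 ≤ x (Sum.inl 2) ∧ x (Sum.inl 2) ≤ 2 * x (Sum.inl 0) ∧
        x (Sum.inl 2) ≤ 2 * x (Sum.inl 1) ∧
        2 * x (Sum.inl 0) + 2 * x (Sum.inl 1) - x (Sum.inl 2) ≤ 2 * c) ∧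
      (0 ≤ x (Sum.inr 0) ∧ 0 ≤ x (Sum.inr 1) ∧ x (Sum.inr 0) + x (Sum.inr 1) ≤ c) := by
  rw [memProd hc.ne', memP hc.le, memQ hc.le]

lemma intProd {c : ℝ} (hc : 0 < c) {x : Fin 3 ⊕ Fin 2 → ℝ} :
    x ∈ interior (c • prodSet Pex Qex) ↔
      (0 < x (Sum.inl 2) ∧ x (Sum.inl 2) < 2 * x (Sum.inl 0) ∧
        x (Sum.inl 2) < 2 * x (Sum.inl 1) ∧
        2 * x (Sum.inl 0) + 2 * x (Sum.inl 1) - x (Sum.inl 2) < 2 * c) ∧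
      (0 < x (Sum.inr 0) ∧ 0 < x (Sum.inr 1) ∧ x (Sum.inr 0) + x (Sum.inr 1) < c) := by
  constructor
  · intro h
    have h0 := interior_le_strict (a := Sum.elim ![0, 0, -1] ![0, 0]) (b := 0)
      (by intro hh; have := congrFun hh (Sum.inl 2); norm_num [Matrix.cons_val_two] at this)
      (by intro y hy; obtain ⟨⟨a0, a1, a2, a3⟩, b0, b1, b2⟩ := (memProdIneq hc).1 hy
          simp [Fintype.sum_sum_type, Fin.sum_univ_three, Fin.sum_univ_two]; linarith) h
    have h1 := interior_le_strict (a := Sum.elim ![-2, 0, 1] ![0, 0]) (b := 0)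
      (by intro hh; have := congrFun hh (Sum.inl 0); norm_num at this)
      (by intro y hy; obtain ⟨⟨a0, a1, a2, a3⟩, b0, b1, b2⟩ := (memProdIneq hc).1 hy
          simp [Fintype.sum_sum_type, Fin.sum_univ_three, Fin.sum_univ_two]; linarith) h
    have h2 := interior_le_strict (a := Sum.elim ![0, -2, 1] ![0, 0]) (b := 0)
      (by intro hh; have := congrFun hh (Sum.inl 1); norm_num at this)
      (by intro y hy; obtain ⟨⟨a0, a1, a2, a3⟩, b0, b1, b2⟩ := (memProdIneq hc).1 hy
          simp [Fintype.sum_sum_type, Fin.sum_univ_three, Fin.sum_univ_two]; linarith) h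
    have h3 := interior_le_strict (a := Sum.elim ![2, 2, -1] ![0, 0]) (b := 2 * c)
      (by intro hh; have := congrFun hh (Sum.inl 0); norm_num at this)
      (by intro y hy; obtain ⟨⟨a0, a1, a2, a3⟩, b0, b1, b2⟩ := (memProdIneq hc).1 hy
          simp [Fintype.sum_sum_type, Fin.sum_univ_three, Fin.sum_univ_two]; linarith) h
    have h4 := interior_le_strict (a := Sum.elim ![0, 0, 0] ![-1, 0]) (b := 0)
      (by intro hh; have := congrFun hh (Sum.inr 0); norm_num at this)
      (by intro y hy; obtain ⟨⟨a0, a1, a2, a3⟩, b0, b1, b2⟩ := (memProdIneq hc).1 hy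
          simp [Fintype.sum_sum_type, Fin.sum_univ_three, Fin.sum_univ_two]; linarith) h
    have h5 := interior_le_strict (a := Sum.elim ![0, 0, 0] ![0, -1]) (b := 0)
      (by intro hh; have := congrFun hh (Sum.inr 1); norm_num at this)
      (by intro y hy; obtain ⟨⟨a0, a1, a2, a3⟩, b0, b1, b2⟩ := (memProdIneq hc).1 hy
          simp [Fintype.sum_sum_type, Fin.sum_univ_three, Fin.sum_univ_two]; linarith) h
    have h6 := interior_le_strict (a := Sum.elim ![0, 0, 0] ![1, 1]) (b := c)
      (by intro hh; have := congrFun hh (Sum.inr 0); norm_num at this)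
      (by intro y hy; obtain ⟨⟨a0, a1, a2, a3⟩, b0, b1, b2⟩ := (memProdIneq hc).1 hy
          simp [Fintype.sum_sum_type, Fin.sum_univ_three, Fin.sum_univ_two]; linarith) h
    simp [Fintype.sum_sum_type, Fin.sum_univ_three, Fin.sum_univ_two] at h0 h1 h2 h3 h4 h5 h6
    refine ⟨⟨by linarith, by linarith, by linarith, by linarith⟩,
      by linarith, by linarith, by linarith⟩
  · intro h
    have hopen : IsOpen {y : Fin 3 ⊕ Fin 2 → ℝ |
        (0 < y (Sum.inl 2) ∧ y (Sum.inl 2) < 2 * y (Sum.inl 0) ∧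
          y (Sum.inl 2) < 2 * y (Sum.inl 1) ∧
          2 * y (Sum.inl 0) + 2 * y (Sum.inl 1) - y (Sum.inl 2) < 2 * c) ∧
        (0 < y (Sum.inr 0) ∧ 0 < y (Sum.inr 1) ∧ y (Sum.inr 0) + y (Sum.inr 1) < c)} := by
      refine IsOpen.and (IsOpen.and ?_ (IsOpen.and ?_ (IsOpen.and ?_ ?_)))
        (IsOpen.and ?_ (IsOpen.and ?_ ?_)) <;>
        first
        | exact isOpen_lt continuous_const (continuous_apply _)
        | exact isOpen_lt (continuous_apply _) (by fun_prop)
        | exact isOpen_lt (by fun_prop) continuous_const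
    refine interior_maximal (fun y hy => (memProdIneq hc).2 ?_) hopen h
    exact ⟨⟨hy.1.1.le, hy.1.2.1.le, hy.1.2.2.1.le, hy.1.2.2.2.le⟩,
      hy.2.1.le, hy.2.2.1.le, hy.2.2.2.le⟩

lemma leastP : IsLeast (codegSet Pex) 2 := by
  constructor
  · refine ⟨by norm_num, ![1, 1, 1], ?_⟩
    rw [intP (by norm_num : (0:ℝ) < ((2:ℕ):ℝ))]
    norm_num [Matrix.cons_val_two]
  · rintro c ⟨hc0, z, hz⟩
    by_contra hlt
    push_neg at hlt
    have hcr : (0:ℝ) < (c:ℝ) := by exact_mod_cast hc0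
    obtain ⟨h0, h1, h2, h3⟩ := (intP hcr).1 hz
    have i0 : (0:ℤ) < z 2 := by exact_mod_cast h0
    have i1 : z 2 < 2 * z 0 := by exact_mod_cast h1
    have i2 : z 2 < 2 * z 1 := by exact_mod_cast h2
    have i3 : 2 * z 0 + 2 * z 1 - z 2 < 2 * (c:ℤ) := by exact_mod_cast h3
    omega

lemma leastQ : IsLeast (codegSet Qex) 3 := by
  constructor
  · refine ⟨by norm_num, ![1, 1], ?_⟩
    rw [intQ (by norm_num : (0:ℝ) < ((3:ℕ):ℝ))]
    norm_num
  · rintro c ⟨hc0, z, hz⟩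
    by_contra hlt
    push_neg at hlt
    have hcr : (0:ℝ) < (c:ℝ) := by exact_mod_cast hc0
    obtain ⟨h0, h1, h2⟩ := (intQ hcr).1 hz
    have i0 : (0:ℤ) < z 0 := by exact_mod_cast h0
    have i1 : (0:ℤ) < z 1 := by exact_mod_cast h1
    have i2 : z 0 + z 1 < (c:ℤ) := by exact_mod_cast h2
    omega

lemma levelP : IsLevel Pex 2 := by
  intro k z hk hz
  have hkr : (0:ℝ) < (k:ℝ) := by
    have : 0 < k := by omega
    exact_mod_cast this
  obtain ⟨h0, h1, h2, h3⟩ := (intP hkr).1 hz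
  have i0 : (0:ℤ) < z 2 := by exact_mod_cast h0
  have i1 : z 2 < 2 * z 0 := by exact_mod_cast h1
  have i2 : z 2 < 2 * z 1 := by exact_mod_cast h2
  have i3 : 2 * z 0 + 2 * z 1 - z 2 < 2 * (k:ℤ) := by exact_mod_cast h3
  refine ⟨![1, 1, 1], fun i => z i - 1, ?_, ?_, by funext i; fin_cases i <;> simp⟩
  · rw [intP (by norm_num : (0:ℝ) < ((2:ℕ):ℝ))]
    norm_num [Matrix.cons_val_two]
  · rw [memP (by positivity : (0:ℝ) ≤ ((k - 2:ℕ):ℝ))]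
    have hcast : ((k - 2:ℕ):ℝ) = (k:ℝ) - 2 := by
      rw [Nat.cast_sub hk]; norm_num
    rw [hcast]
    have r0 : (1:ℝ) ≤ (z 2:ℝ) := by exact_mod_cast i0
    have r1 : (z 2:ℝ) + 1 ≤ 2 * (z 0:ℝ) := by exact_mod_cast i1
    have r2 : (z 2:ℝ) + 1 ≤ 2 * (z 1:ℝ) := by exact_mod_cast i2
    have r3 : 2 * (z 0:ℝ) + 2 * (z 1:ℝ) - (z 2:ℝ) + 1 ≤ 2 * (k:ℝ) := by exact_mod_cast i3
    push_cast
    refine ⟨by linarith, by linarith, by linarith, by linarith⟩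

lemma levelQ : IsLevel Qex 3 := by
  intro k z hk hz
  have hkr : (0:ℝ) < (k:ℝ) := by
    have : 0 < k := by omega
    exact_mod_cast this
  obtain ⟨h0, h1, h2⟩ := (intQ hkr).1 hz
  have i0 : (0:ℤ) < z 0 := by exact_mod_cast h0
  have i1 : (0:ℤ) < z 1 := by exact_mod_cast h1
  have i2 : z 0 + z 1 < (k:ℤ) := by exact_mod_cast h2
  refine ⟨![1, 1], fun i => z i - 1, ?_, ?_, by funext i; fin_cases i <;> simp⟩
  · rw [intQ (by norm_num : (0:ℝ) < ((3:ℕ):ℝ))]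
    norm_num
  · rw [memQ (by positivity : (0:ℝ) ≤ ((k - 3:ℕ):ℝ))]
    have hcast : ((k - 3:ℕ):ℝ) = (k:ℝ) - 3 := by
      rw [Nat.cast_sub hk]; norm_num
    rw [hcast]
    have r0 : (1:ℝ) ≤ (z 0:ℝ) := by exact_mod_cast i0
    have r1 : (1:ℝ) ≤ (z 1:ℝ) := by exact_mod_cast i1
    have r2 : (z 0:ℝ) + (z 1:ℝ) + 1 ≤ (k:ℝ) := by exact_mod_cast i2
    push_cast
    refine ⟨by linarith, by linarith, by linarith⟩

lemma leastProd : IsLeast (codegSet (prodSet Pex Qex)) 3 := by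
  constructor
  · refine ⟨by norm_num, Sum.elim ![1, 1, 1] ![1, 1], ?_⟩
    rw [intProd (by norm_num : (0:ℝ) < ((3:ℕ):ℝ))]
    norm_num [Matrix.cons_val_two]
  · rintro c ⟨hc0, z, hz⟩
    by_contra hlt
    push_neg at hlt
    have hcr : (0:ℝ) < (c:ℝ) := by exact_mod_cast hc0
    obtain ⟨-, b0, b1, b2⟩ := (intProd hcr).1 hz
    have i0 : (0:ℤ) < z (Sum.inr 0) := by exact_mod_cast b0
    have i1 : (0:ℤ) < z (Sum.inr 1) := by exact_mod_cast b1
    have i2 : z (Sum.inr 0) + z (Sum.inr 1) < (c:ℤ) := by exact_mod_cast b2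
    omega

lemma part4 : (fun i => (zex i : ℝ)) ∈ interior ((4 : ℝ) • prodSet Pex Qex) := by
  rw [intProd (by norm_num : (0:ℝ) < 4)]
  norm_num [zex, Matrix.cons_val_two]

lemma part5 : ¬ ∃ y w : Fin 3 ⊕ Fin 2 → ℤ,
    (fun i => (y i : ℝ)) ∈ interior ((3 : ℝ) • prodSet Pex Qex) ∧
    (fun i => (w i : ℝ)) ∈ prodSet Pex Qex ∧ zex = y + w := by
  rintro ⟨y, w, hy, hw, hzw⟩
  obtain ⟨⟨a0, a1, a2, a3⟩, -, -, -⟩ := (intProd (by norm_num : (0:ℝ) < 3)).1 hy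
  obtain ⟨hwP, -⟩ := hw
  obtain ⟨c0, c1, c2, c3⟩ := memP1.1 hwP
  have A0 : (0:ℤ) < y (Sum.inl 2) := by exact_mod_cast a0
  have A1 : y (Sum.inl 2) < 2 * y (Sum.inl 0) := by exact_mod_cast a1
  have A2 : y (Sum.inl 2) < 2 * y (Sum.inl 1) := by exact_mod_cast a2
  have A3 : 2 * y (Sum.inl 0) + 2 * y (Sum.inl 1) - y (Sum.inl 2) < 6 := by exact_mod_cast a3
  have C0 : (0:ℤ) ≤ w (Sum.inl 2) := by exact_mod_cast (show (0:ℝ) ≤ (w (Sum.inl 2):ℝ) from c0)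
  have C1 : w (Sum.inl 2) ≤ 2 * w (Sum.inl 0) := by exact_mod_cast (show (w (Sum.inl 2):ℝ) ≤ 2 * (w (Sum.inl 0):ℝ) from c1)
  have C2 : w (Sum.inl 2) ≤ 2 * w (Sum.inl 1) := by exact_mod_cast (show (w (Sum.inl 2):ℝ) ≤ 2 * (w (Sum.inl 1):ℝ) from c2)
  have C3 : 2 * w (Sum.inl 0) + 2 * w (Sum.inl 1) - w (Sum.inl 2) ≤ 2 := by exact_mod_cast (show 2 * (w (Sum.inl 0):ℝ) + 2 * (w (Sum.inl 1):ℝ) - (w (Sum.inl 2):ℝ) ≤ 2 from c3)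
  have E0 : (2:ℤ) = y (Sum.inl 0) + w (Sum.inl 0) := by
    have := congrFun hzw (Sum.inl 0); simpa [zex] using this
  have E1 : (2:ℤ) = y (Sum.inl 1) + w (Sum.inl 1) := by
    have := congrFun hzw (Sum.inl 1); simpa [zex] using this
  have E2 : (2:ℤ) = y (Sum.inl 2) + w (Sum.inl 2) := by
    have := congrFun hzw (Sum.inl 2); simpa [zex] using this
  omega

lemma part6 : ¬ IsLevel (prodSet Pex Qex) 3 := by
  intro hL
  have h4 : (fun i => (zex i : ℝ)) ∈ interior (((4:ℕ):ℝ) • prodSet Pex Qex) := by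
    have : ((4:ℕ):ℝ) = (4:ℝ) := by norm_num
    rw [this]; exact part4
  obtain ⟨y, w, hy, hw, hzw⟩ := hL 4 zex (by norm_num) h4
  apply part5
  refine ⟨y, w, ?_, ?_, hzw⟩
  · have : ((3:ℕ):ℝ) = (3:ℝ) := by norm_num
    rwa [this] at hy
  · have : ((4 - 3:ℕ):ℝ) = (1:ℝ) := by norm_num
    rw [this, one_smul] at hw
    exact hw

/-- `P` and `Q` are both level, but the product `P × Q` has codegree 3 and is not
level: the point `(2,2,2,2,1)` is an interior lattice point of `4(P×Q)` that admits no
decomposition into an interior lattice point of `3(P×Q)` plus a lattice point of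
`P × Q`. -/
theorem stmt_18 :
    (∀ r : ℕ, IsLeast (codegSet Pex) r → IsLevel Pex r) ∧
    (∀ r : ℕ, IsLeast (codegSet Qex) r → IsLevel Qex r) ∧
    IsLeast (codegSet (prodSet Pex Qex)) 3 ∧
    (fun i => (zex i : ℝ)) ∈ interior ((4 : ℝ) • prodSet Pex Qex) ∧
    (¬ ∃ y w : Fin 3 ⊕ Fin 2 → ℤ,
        (fun i => (y i : ℝ)) ∈ interior ((3 : ℝ) • prodSet Pex Qex) ∧
        (fun i => (w i : ℝ)) ∈ prodSet Pex Qex ∧ zex = y + w) ∧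
    ¬ IsLevel (prodSet Pex Qex) 3 := by
  refine ⟨?_, ?_, leastProd, part4, part5, part6⟩
  · intro r hr
    obtain rfl := hr.unique leastP
    exact levelP
  · intro r hr
    obtain rfl := hr.unique leastQ
    exact levelQ
end
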